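/- arXiv:2001.10387 — 6 statements merged into one kernel-verified Lean document; each statement's English description precedes it below -/
import Mathlib

section
/- Let X be a random vector, Y a target variable, and V a random variable such that V - X - Y is a Markov chain and V is independent of the sub-vector X^α for some subset α of indices. Then I(V;Y) ≤ I(Y; X^{-α} | X^α), where X^{-α} denotes the remaining coordinates of X. -/
open Finset
open scoped BigOperators Classical

/-- Shannon entropy (in bits) of a finite distribution. -/
noncomputable def H {A : Type*} [Fintype A] (p : A → ℝ) : ℝ :=
  ∑ a, (if p a = 0 then 0 else -(p a * Real.logb 2 (p a)))

/-- Shannon mutual information (in bits) of a finite joint distribution. -/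
noncomputable def MI {A B : Type*} [Fintype A] [Fintype B] (p : A → B → ℝ) : ℝ :=
  ∑ a, ∑ b,
    (if p a b = 0 then 0 else
      p a b * Real.logb 2 (p a b / ((∑ b', p a b') * (∑ a', p a' b))))

/-- Conditional mutual information `I(A; B | C)` of a finite joint distribution. -/
noncomputable def CMI {A B C : Type*} [Fintype A] [Fintype B] [Fintype C]
    (p : A → B → C → ℝ) : ℝ :=
  ∑ a, ∑ b, ∑ c,
    (if p a b c = 0 then 0 else
      p a b c * Real.logb 2
        ((p a b c * (∑ a', ∑ b', p a' b' c)) /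
          ((∑ b', p a b' c) * (∑ a', p a' b c))))

def IsJoint {A B : Type*} [Fintype A] [Fintype B] (p : A → B → ℝ) : Prop :=
  (∀ a b, 0 ≤ p a b) ∧ ∑ a, ∑ b, p a b = 1

def IsDist {A : Type*} [Fintype A] (p : A → ℝ) : Prop :=
  (∀ a, 0 ≤ p a) ∧ ∑ a, p a = 1

def IsChannel {A B : Type*} [Fintype A] [Fintype B] (c : A → B → ℝ) : Prop :=
  (∀ a b, 0 ≤ c a b) ∧ ∀ a, ∑ b, c a b = 1

/-- Given a joint distribution `q` of `(V, X)`, the pair `(V, f(X))` is independent. -/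
def IndepWithFun {V X T : Type*} [Fintype V] [Fintype X] (q : V → X → ℝ) (f : X → T) : Prop :=
  ∀ v t, (∑ x, if f x = t then q v x else 0) =
    (∑ x, q v x) * (∑ v', ∑ x, if f x = t then q v' x else 0)

/-- Markov chain `A - B - C`: conditional independence of `A` and `C` given `B`. -/
def MarkovChain {A B C : Type*} [Fintype A] [Fintype B] [Fintype C]
    (q : A → B → C → ℝ) : Prop :=
  ∀ a b c, q a b c * (∑ a', ∑ c', q a' b c') =
    (∑ c', q a b c') * (∑ a', q a' b c)

/-- Restriction `X^α` of a tuple to the coordinates in `α`. -/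
def restr {n : ℕ} {𝓧 : Fin n → Type*} (α : Finset (Fin n)) (x : ∀ i, 𝓧 i) :
    ∀ i : α, 𝓧 i.1 := fun i => x i.1

/-- The set of values `I(V;Y)` achievable through `𝛂`-synergistic channels `p_{V|X}`
(so that `V - X - Y` is a Markov chain and `V ⫫ X^α` for every `α ∈ A`). -/
def synSet {n : ℕ} {𝓧 : Fin n → Type*} [∀ i, Fintype (𝓧 i)] {Y : Type*} [Fintype Y]
    (p : (∀ i, 𝓧 i) → Y → ℝ) (A : Finset (Finset (Fin n))) : Set ℝ :=
  { r | ∃ (k : ℕ) (c : (∀ i, 𝓧 i) → Fin k → ℝ), IsChannel c ∧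
      (∀ α ∈ A, IndepWithFun (fun v x => c x v * (∑ y, p x y)) (restr (𝓧 := 𝓧) α)) ∧
      r = MI (fun (v : Fin k) (y : Y) => ∑ x, c x v * p x y) }

/-- Synergistic disclosure `S^𝛂(X → Y)`. -/
noncomputable def Syn {n : ℕ} {𝓧 : Fin n → Type*} [∀ i, Fintype (𝓧 i)] {Y : Type*} [Fintype Y]
    (p : (∀ i, 𝓧 i) → Y → ℝ) (A : Finset (Finset (Fin n))) : ℝ :=
  sSup (synSet p A)

/-- The joint distribution of the pair `(X, X)`, used for self-synergy `S^𝛂(X → X)`. -/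
noncomputable def selfJoint {X : Type*} [Fintype X] (pX : X → ℝ) : X → X → ℝ :=
  fun x x' => if x' = x then pX x else 0


lemma gibbs_term {x r : ℝ} (hx : 0 < x) (hr : 0 < r) :
    (x - r) / Real.log 2 ≤ x * Real.logb 2 (x / r) := by
  have h2 : (0:ℝ) < Real.log 2 := Real.log_pos (by norm_num)
  have h := Real.log_le_sub_one_of_pos (show (0:ℝ) < r / x by positivity)
  have hlog : Real.log (x / r) = - Real.log (r / x) := by
    rw [← Real.log_inv]; congr 1; rw [inv_div]
  have hx' : x * Real.log (r / x) ≤ r - x := by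
    have := mul_le_mul_of_nonneg_left h (le_of_lt hx)
    calc x * Real.log (r/x) ≤ x * (r/x - 1) := this
      _ = r - x := by field_simp
  rw [Real.logb, hlog, div_le_iff₀ h2]
  have hring : x * (-Real.log (r/x) / Real.log 2) * Real.log 2
      = -(x * Real.log (r/x)) := by field_simp
  rw [hring]; linarith

lemma expand_if {ι : Type*} [Fintype ι] (g : ι → ℝ) (hg : ∀ i, 0 ≤ g i) (L : ℝ) :
    (if (∑ i, g i) = 0 then 0 else (∑ i, g i) * L)
      = ∑ i, (if g i = 0 then 0 else g i * L) := by
  by_cases h : (∑ i, g i) = 0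
  · rw [if_pos h]
    symm; apply Finset.sum_eq_zero
    intro i _
    have hz : g i = 0 :=
      (Finset.sum_eq_zero_iff_of_nonneg (fun i _ => hg i)).mp h i (mem_univ i)
    simp [hz]
  · rw [if_neg h, Finset.sum_mul]
    apply Finset.sum_congr rfl
    intro i _
    by_cases hi : g i = 0 <;> simp [hi]

lemma comm3 {A B C : Type*} [Fintype A] [Fintype B] [Fintype C] (f : A → B → C → ℝ) :
    ∑ a, ∑ b, ∑ c, f a b c = ∑ c, ∑ b, ∑ a, f a b c :=
  calc ∑ a, ∑ b, ∑ c, f a b c = ∑ b, ∑ a, ∑ c, f a b c := Finset.sum_comm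
    _ = ∑ b, ∑ c, ∑ a, f a b c := Finset.sum_congr rfl fun _ _ => Finset.sum_comm
    _ = ∑ c, ∑ b, ∑ a, f a b c := Finset.sum_comm

lemma cycle3 {A B C : Type*} [Fintype A] [Fintype B] [Fintype C] (f : A → B → C → ℝ) :
    ∑ c, ∑ a, ∑ b, f a b c = ∑ a, ∑ b, ∑ c, f a b c :=
  calc ∑ c, ∑ a, ∑ b, f a b c = ∑ a, ∑ c, ∑ b, f a b c := Finset.sum_comm
    _ = ∑ a, ∑ b, ∑ c, f a b c := Finset.sum_congr rfl fun _ _ => Finset.sum_comm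

lemma comm4 {A B C D : Type*} [Fintype A] [Fintype B] [Fintype C] [Fintype D]
    (f : A → B → C → D → ℝ) :
    ∑ a, ∑ b, ∑ c, ∑ d, f a b c d = ∑ d, ∑ c, ∑ b, ∑ a, f a b c d :=
  calc ∑ a, ∑ b, ∑ c, ∑ d, f a b c d
      = ∑ a, ∑ d, ∑ c, ∑ b, f a b c d := Finset.sum_congr rfl fun a _ => comm3 _
    _ = ∑ d, ∑ a, ∑ c, ∑ b, f a b c d := Finset.sum_comm
    _ = ∑ d, ∑ c, ∑ a, ∑ b, f a b c d := Finset.sum_congr rfl fun _ _ => Finset.sum_comm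
    _ = ∑ d, ∑ c, ∑ b, ∑ a, f a b c d :=
        Finset.sum_congr rfl fun _ _ => Finset.sum_congr rfl fun _ _ => Finset.sum_comm
section KeyLemma

variable {V A B Y : Type*} [Fintype V] [Fintype A] [Fintype B] [Fintype Y]

/-- marginals of a 4-variable joint distribution -/
def mVY (p : V → A → B → Y → ℝ) (v : V) (y : Y) : ℝ := ∑ a, ∑ b, p v a b y
def mV (p : V → A → B → Y → ℝ) (v : V) : ℝ := ∑ y, mVY p v y
def mY (p : V → A → B → Y → ℝ) (y : Y) : ℝ := ∑ v, mVY p v y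
def mYBA (p : V → A → B → Y → ℝ) (y : Y) (b : B) (a : A) : ℝ := ∑ v, p v a b y
def mA (p : V → A → B → Y → ℝ) (a : A) : ℝ := ∑ y, ∑ b, mYBA p y b a
def mYA (p : V → A → B → Y → ℝ) (y : Y) (a : A) : ℝ := ∑ b, mYBA p y b a
def mBA (p : V → A → B → Y → ℝ) (b : B) (a : A) : ℝ := ∑ y, mYBA p y b a
def mVAB (p : V → A → B → Y → ℝ) (v : V) (a : A) (b : B) : ℝ := ∑ y, p v a b y
def mVA (p : V → A → B → Y → ℝ) (v : V) (a : A) : ℝ := ∑ b, mVAB p v a b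

/-- The reference (sub)distribution for the Gibbs argument. -/
noncomputable def rr (p : V → A → B → Y → ℝ) (v : V) (a : A) (b : B) (y : Y) : ℝ :=
  if mVA p v a * mY p y = 0 then 0
  else mVAB p v a b * mYA p y a * mVY p v y / (mVA p v a * mY p y)

lemma hMI_eq (p : V → A → B → Y → ℝ) :
    MI (fun v y => ∑ a, ∑ b, p v a b y)
      = ∑ v, ∑ y, (if mVY p v y = 0 then 0 else
          mVY p v y * Real.logb 2 (mVY p v y / (mV p v * mY p y))) := rfl

lemma hCMI_eq (p : V → A → B → Y → ℝ) :
    CMI (fun y b a => ∑ v, p v a b y)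
      = ∑ y, ∑ b, ∑ a, (if mYBA p y b a = 0 then 0 else
          mYBA p y b a * Real.logb 2
            ((mYBA p y b a * mA p a) / (mYA p y a * mBA p b a))) := rfl

end KeyLemma
section KeyLemma2

variable {V A B Y : Type*} [Fintype V] [Fintype A] [Fintype B] [Fintype Y]

lemma key_lemma (p : V → A → B → Y → ℝ)
    (hpos : ∀ v a b y, 0 ≤ p v a b y)
    (hsum : ∑ v, ∑ a, ∑ b, ∑ y, p v a b y = 1)
    (hmc : ∀ v a b y, p v a b y * (∑ v', ∑ y', p v' a b y') =
      (∑ y', p v a b y') * (∑ v', p v' a b y))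
    (hind : ∀ v a, (∑ b, ∑ y, p v a b y) =
      (∑ a', ∑ b, ∑ y, p v a' b y) * (∑ v', ∑ b, ∑ y, p v' a b y)) :
    MI (fun v y => ∑ a, ∑ b, p v a b y) ≤ CMI (fun y b a => ∑ v, p v a b y) := by
  classical
  have hlog2 : (0:ℝ) < Real.log 2 := Real.log_pos (by norm_num)
  -- nonnegativity of marginals
  have nnVY : ∀ v y, 0 ≤ mVY p v y := fun v y =>
    Finset.sum_nonneg fun a _ => Finset.sum_nonneg fun b _ => hpos v a b y
  have nnV : ∀ v, 0 ≤ mV p v := fun v => Finset.sum_nonneg fun y _ => nnVY v y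
  have nnY : ∀ y, 0 ≤ mY p y := fun y => Finset.sum_nonneg fun v _ => nnVY v y
  have nnYBA : ∀ y b a, 0 ≤ mYBA p y b a := fun y b a =>
    Finset.sum_nonneg fun v _ => hpos v a b y
  have nnA : ∀ a, 0 ≤ mA p a := fun a =>
    Finset.sum_nonneg fun y _ => Finset.sum_nonneg fun b _ => nnYBA y b a
  have nnYA : ∀ y a, 0 ≤ mYA p y a := fun y a =>
    Finset.sum_nonneg fun b _ => nnYBA y b a
  have nnBA : ∀ b a, 0 ≤ mBA p b a := fun b a =>
    Finset.sum_nonneg fun y _ => nnYBA y b a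
  have nnVAB : ∀ v a b, 0 ≤ mVAB p v a b := fun v a b =>
    Finset.sum_nonneg fun y _ => hpos v a b y
  have nnVA : ∀ v a, 0 ≤ mVA p v a := fun v a =>
    Finset.sum_nonneg fun b _ => nnVAB v a b
  have nnrr : ∀ v a b y, 0 ≤ rr p v a b y := by
    intro v a b y
    unfold rr
    split
    · exact le_refl 0
    · exact div_nonneg (mul_nonneg (mul_nonneg (nnVAB v a b) (nnYA y a)) (nnVY v y))
        (mul_nonneg (nnVA v a) (nnY y))
  -- reformulated hypotheses
  have hmc' : ∀ v a b y,
      p v a b y * mBA p b a = mVAB p v a b * mYBA p y b a := by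
    intro v a b y
    have hre : mBA p b a = ∑ v', ∑ y', p v' a b y' := Finset.sum_comm
    rw [hre]; exact hmc v a b y
  have hind' : ∀ v a, mVA p v a = mV p v * mA p a := by
    intro v a
    have h1 : mV p v = ∑ a', ∑ b, ∑ y, p v a' b y := by
      unfold mV mVY; exact cycle3 (fun a b y => p v a b y)
    have h2 : mA p a = ∑ v', ∑ b, ∑ y, p v' a b y := by
      unfold mA mYBA; exact (comm3 (fun v b y => p v a b y)).symm
    rw [h1, h2]; exact hind v a
  -- positivity on the support
  have posM : ∀ v a b y, p v a b y ≠ 0 →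
      0 < p v a b y ∧ 0 < mVY p v y ∧ 0 < mV p v ∧ 0 < mY p y ∧ 0 < mYBA p y b a ∧
      0 < mA p a ∧ 0 < mYA p y a ∧ 0 < mBA p b a ∧ 0 < mVAB p v a b ∧ 0 < mVA p v a := by
    intro v a b y hne
    have hp : 0 < p v a b y := lt_of_le_of_ne (hpos v a b y) (Ne.symm hne)
    have hb : 0 < ∑ b, p v a b y :=
      Finset.sum_pos' (fun b _ => hpos v a b y) ⟨b, mem_univ b, hp⟩
    have hVY : 0 < mVY p v y :=
      Finset.sum_pos' (fun a _ => Finset.sum_nonneg fun b _ => hpos v a b y)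
        ⟨a, mem_univ a, hb⟩
    have hV : 0 < mV p v :=
      Finset.sum_pos' (fun y _ => nnVY v y) ⟨y, mem_univ y, hVY⟩
    have hY : 0 < mY p y :=
      Finset.sum_pos' (fun v _ => nnVY v y) ⟨v, mem_univ v, hVY⟩
    have hYBA : 0 < mYBA p y b a :=
      Finset.sum_pos' (fun v _ => hpos v a b y) ⟨v, mem_univ v, hp⟩
    have hYA : 0 < mYA p y a :=
      Finset.sum_pos' (fun b _ => nnYBA y b a) ⟨b, mem_univ b, hYBA⟩
    have hA : 0 < mA p a :=
      Finset.sum_pos' (fun y _ => Finset.sum_nonneg fun b _ => nnYBA y b a)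
        ⟨y, mem_univ y, hYA⟩
    have hBA : 0 < mBA p b a :=
      Finset.sum_pos' (fun y _ => nnYBA y b a) ⟨y, mem_univ y, hYBA⟩
    have hVAB : 0 < mVAB p v a b :=
      Finset.sum_pos' (fun y _ => hpos v a b y) ⟨y, mem_univ y, hp⟩
    have hVA : 0 < mVA p v a :=
      Finset.sum_pos' (fun b _ => nnVAB v a b) ⟨b, mem_univ b, hVAB⟩
    exact ⟨hp, hVY, hV, hY, hYBA, hA, hYA, hBA, hVAB, hVA⟩
  -- the termwise inequality
  have hterm : ∀ v a b y,
      (if p v a b y = 0 then 0 else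
        p v a b y * Real.logb 2 (mVY p v y / (mV p v * mY p y)))
        + (p v a b y - rr p v a b y) / Real.log 2
      ≤ (if p v a b y = 0 then 0 else
          p v a b y * Real.logb 2 ((mYBA p y b a * mA p a) / (mYA p y a * mBA p b a))) := by
    intro v a b y
    by_cases hne : p v a b y = 0
    · rw [if_pos hne, if_pos hne, hne]
      have := nnrr v a b y
      have : (0 - rr p v a b y) / Real.log 2 ≤ 0 := by
        apply div_nonpos_of_nonpos_of_nonneg <;> linarith
      linarith
    · rw [if_neg hne, if_neg hne]
      obtain ⟨hp, hVY, hV, hY, hYBA, hA, hYA, hBA, hVAB, hVA⟩ := posM v a b y hne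
      have hrr : rr p v a b y
          = mVAB p v a b * mYA p y a * mVY p v y / (mVA p v a * mY p y) := by
        unfold rr
        rw [if_neg (by positivity)]
      have hrpos : 0 < rr p v a b y := by rw [hrr]; positivity
      have harg : (mYBA p y b a * mA p a) / (mYA p y a * mBA p b a)
          = (mVY p v y / (mV p v * mY p y)) * (p v a b y / rr p v a b y) := by
        rw [hrr]
        rw [hind' v a]
        field_simp
        linear_combination (-1 : ℝ) * hmc' v a b y
      rw [harg, Real.logb_mul (by positivity) (by positivity), mul_add]
      have := gibbs_term hp hrpos
      linarith
  -- sum of rr over b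
  have hsb : ∀ v y a, (∑ b, rr p v a b y)
      = if mVA p v a * mY p y = 0 then 0 else mYA p y a * mVY p v y / mY p y := by
    intro v y a
    by_cases hc : mVA p v a * mY p y = 0
    · rw [if_pos hc]
      apply Finset.sum_eq_zero
      intro b _
      unfold rr; rw [if_pos hc]
    · rw [if_neg hc]
      obtain ⟨h1, h2⟩ := mul_ne_zero_iff.mp hc
      have hb : ∀ b, rr p v a b y
          = mVAB p v a b * (mYA p y a * mVY p v y / (mVA p v a * mY p y)) := by
        intro b; unfold rr; rw [if_neg hc]; ring
      simp only [hb]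
      rw [← Finset.sum_mul]
      have hm : (∑ b, mVAB p v a b) = mVA p v a := rfl
      rw [hm]
      field_simp
  have hra : ∀ v y, (∑ a, ∑ b, rr p v a b y) ≤ mVY p v y := by
    intro v y
    have step1 : ∀ a, (∑ b, rr p v a b y)
        ≤ if mY p y = 0 then 0 else mYA p y a * mVY p v y / mY p y := by
      intro a
      rw [hsb v y a]
      by_cases hY0 : mY p y = 0
      · rw [if_pos hY0, if_pos (by rw [hY0, mul_zero])]
      · rw [if_neg hY0]
        by_cases hVA0 : mVA p v a = 0
        · rw [if_pos (by rw [hVA0, zero_mul])]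
          have hYpos : 0 < mY p y := lt_of_le_of_ne (nnY y) (Ne.symm hY0)
          exact div_nonneg (mul_nonneg (nnYA y a) (nnVY v y)) (le_of_lt hYpos)
        · rw [if_neg (mul_ne_zero hVA0 hY0)]
    calc (∑ a, ∑ b, rr p v a b y)
        ≤ ∑ a, if mY p y = 0 then 0 else mYA p y a * mVY p v y / mY p y :=
          Finset.sum_le_sum fun a _ => step1 a
      _ ≤ mVY p v y := by
        by_cases hY0 : mY p y = 0
        · simp only [if_pos hY0, Finset.sum_const, smul_zero]
          exact nnVY v y
        · simp only [if_neg hY0]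
          have he : ∀ a, mYA p y a * mVY p v y / mY p y
              = mYA p y a * (mVY p v y / mY p y) := fun a => by ring
          simp only [he]
          rw [← Finset.sum_mul]
          have hsum_a : (∑ a, mYA p y a) = mY p y := by
            unfold mYA mYBA mY mVY
            calc ∑ a, ∑ b, ∑ v, p v a b y
                = ∑ v, ∑ b, ∑ a, p v a b y := comm3 _
              _ = ∑ v, ∑ a, ∑ b, p v a b y :=
                  Finset.sum_congr rfl fun v _ => Finset.sum_comm
          rw [hsum_a]
          have : mY p y * (mVY p v y / mY p y) = mVY p v y := by
            field_simp
          rw [this]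
  have hVYsum : (∑ v, ∑ y, mVY p v y) = 1 := by
    unfold mVY
    calc ∑ v, ∑ y, ∑ a, ∑ b, p v a b y
        = ∑ v, ∑ a, ∑ b, ∑ y, p v a b y :=
          Finset.sum_congr rfl fun v _ => cycle3 (fun a b y => p v a b y)
      _ = 1 := hsum
  have hR : (∑ v, ∑ a, ∑ b, ∑ y, rr p v a b y) ≤ 1 := by
    calc ∑ v, ∑ a, ∑ b, ∑ y, rr p v a b y
        = ∑ v, ∑ y, ∑ a, ∑ b, rr p v a b y :=
          Finset.sum_congr rfl fun v _ => (cycle3 (fun a b y => rr p v a b y)).symm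
      _ ≤ ∑ v, ∑ y, mVY p v y :=
          Finset.sum_le_sum fun v _ => Finset.sum_le_sum fun y _ => hra v y
      _ = 1 := hVYsum
  -- expansions of MI and CMI
  have hMI2 : MI (fun v y => ∑ a, ∑ b, p v a b y)
      = ∑ v, ∑ a, ∑ b, ∑ y, (if p v a b y = 0 then 0 else
          p v a b y * Real.logb 2 (mVY p v y / (mV p v * mY p y))) := by
    rw [hMI_eq]
    calc ∑ v, ∑ y, (if mVY p v y = 0 then 0 else
            mVY p v y * Real.logb 2 (mVY p v y / (mV p v * mY p y)))
        = ∑ v, ∑ y, ∑ a, ∑ b, (if p v a b y = 0 then 0 else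
            p v a b y * Real.logb 2 (mVY p v y / (mV p v * mY p y))) := by
          refine Finset.sum_congr rfl fun v _ => Finset.sum_congr rfl fun y _ => ?_
          have e1 := expand_if (fun a => ∑ b, p v a b y)
            (fun a => Finset.sum_nonneg fun b _ => hpos v a b y)
            (Real.logb 2 (mVY p v y / (mV p v * mY p y)))
          exact e1.trans (Finset.sum_congr rfl fun a _ =>
            expand_if (fun b => p v a b y) (fun b => hpos v a b y) _)
      _ = ∑ v, ∑ a, ∑ b, ∑ y, (if p v a b y = 0 then 0 else
            p v a b y * Real.logb 2 (mVY p v y / (mV p v * mY p y))) :=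
          Finset.sum_congr rfl fun v _ => cycle3 _
  have hCMI2 : CMI (fun y b a => ∑ v, p v a b y)
      = ∑ v, ∑ a, ∑ b, ∑ y, (if p v a b y = 0 then 0 else
          p v a b y * Real.logb 2
            ((mYBA p y b a * mA p a) / (mYA p y a * mBA p b a))) := by
    rw [hCMI_eq]
    calc ∑ y, ∑ b, ∑ a, (if mYBA p y b a = 0 then 0 else
            mYBA p y b a * Real.logb 2
              ((mYBA p y b a * mA p a) / (mYA p y a * mBA p b a)))
        = ∑ y, ∑ b, ∑ a, ∑ v, (if p v a b y = 0 then 0 else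
            p v a b y * Real.logb 2
              ((mYBA p y b a * mA p a) / (mYA p y a * mBA p b a))) := by
          refine Finset.sum_congr rfl fun y _ => Finset.sum_congr rfl fun b _ =>
            Finset.sum_congr rfl fun a _ => ?_
          exact expand_if (fun v => p v a b y) (fun v => hpos v a b y) _
      _ = ∑ v, ∑ a, ∑ b, ∑ y, (if p v a b y = 0 then 0 else
            p v a b y * Real.logb 2
              ((mYBA p y b a * mA p a) / (mYA p y a * mBA p b a))) :=
          (comm4 _).symm
  -- final assembly
  rw [hMI2, hCMI2]
  have hsum_split : ∑ v, ∑ a, ∑ b, ∑ y,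
      ((if p v a b y = 0 then 0 else
          p v a b y * Real.logb 2 (mVY p v y / (mV p v * mY p y)))
        + (p v a b y - rr p v a b y) / Real.log 2)
      ≤ ∑ v, ∑ a, ∑ b, ∑ y, (if p v a b y = 0 then 0 else
          p v a b y * Real.logb 2
            ((mYBA p y b a * mA p a) / (mYA p y a * mBA p b a))) :=
    Finset.sum_le_sum fun v _ => Finset.sum_le_sum fun a _ => Finset.sum_le_sum fun b _ =>
      Finset.sum_le_sum fun y _ => hterm v a b y
  have hT : (0:ℝ) ≤ ∑ v, ∑ a, ∑ b, ∑ y, (p v a b y - rr p v a b y) / Real.log 2 := by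
    have hcollapse : ∑ v, ∑ a, ∑ b, ∑ y, (p v a b y - rr p v a b y) / Real.log 2
        = ((∑ v, ∑ a, ∑ b, ∑ y, p v a b y)
            - (∑ v, ∑ a, ∑ b, ∑ y, rr p v a b y)) / Real.log 2 := by
      simp only [← Finset.sum_div, Finset.sum_sub_distrib]
    rw [hcollapse, hsum]
    apply div_nonneg _ (le_of_lt hlog2)
    linarith [hR]
  refine le_trans (le_add_of_nonneg_right hT) (le_trans (le_of_eq ?_) hsum_split)
  simp only [Finset.sum_add_distrib]


end KeyLemma2
section Reduction

variable {n : ℕ} {𝓧 : Fin n → Type*} [∀ i, Fintype (𝓧 i)]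

/-- Reassemble a tuple from its `α`-part and `αᶜ`-part. -/
def glue (α : Finset (Fin n)) (a : ∀ i : ↥α, 𝓧 i.1) (b : ∀ i : ↥αᶜ, 𝓧 i.1) :
    ∀ i, 𝓧 i := fun i =>
  if h : i ∈ α then a ⟨i, h⟩ else b ⟨i, Finset.mem_compl.mpr h⟩

lemma glue_restr (α : Finset (Fin n)) (x : ∀ i, 𝓧 i) :
    glue α (restr α x) (restr αᶜ x) = x := by
  funext i
  unfold glue restr
  split <;> rfl

lemma restr_glue₁ (α : Finset (Fin n)) (a : ∀ i : ↥α, 𝓧 i.1) (b : ∀ i : ↥αᶜ, 𝓧 i.1) :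
    restr α (glue α a b) = a := by
  funext i
  show glue α a b i.1 = a i
  unfold glue
  rw [dif_pos i.2]

lemma restr_glue₂ (α : Finset (Fin n)) (a : ∀ i : ↥α, 𝓧 i.1) (b : ∀ i : ↥αᶜ, 𝓧 i.1) :
    restr αᶜ (glue α a b) = b := by
  funext i
  show glue α a b i.1 = b i
  unfold glue
  rw [dif_neg (Finset.mem_compl.mp i.2)]

/-- Splitting a tuple into its `α`- and `αᶜ`-parts is a bijection. -/
def splitE (α : Finset (Fin n)) :
    (∀ i, 𝓧 i) ≃ (∀ i : ↥α, 𝓧 i.1) × (∀ i : ↥αᶜ, 𝓧 i.1) where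
  toFun x := (restr α x, restr αᶜ x)
  invFun p := glue α p.1 p.2
  left_inv x := glue_restr α x
  right_inv p := by
    cases p with
    | mk a b => simp [restr_glue₁, restr_glue₂]

lemma sum_glue (α : Finset (Fin n)) (f : (∀ i, 𝓧 i) → ℝ) :
    ∑ x, f x = ∑ a : (∀ i : ↥α, 𝓧 i.1), ∑ b : (∀ i : ↥αᶜ, 𝓧 i.1), f (glue α a b) := by
  calc ∑ x, f x
      = ∑ p : (∀ i : ↥α, 𝓧 i.1) × (∀ i : ↥αᶜ, 𝓧 i.1), f (glue α p.1 p.2) :=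
        Fintype.sum_equiv (splitE α) f (fun p => f (glue α p.1 p.2))
          (fun x => (congrArg f (glue_restr α x)).symm)
    _ = ∑ a : (∀ i : ↥α, 𝓧 i.1), ∑ b : (∀ i : ↥αᶜ, 𝓧 i.1), f (glue α a b) :=
        Fintype.sum_prod_type _

lemma sum_if_glue (α : Finset (Fin n)) (g : (∀ i, 𝓧 i) → ℝ)
    (a : ∀ i : ↥α, 𝓧 i.1) (b : ∀ i : ↥αᶜ, 𝓧 i.1) :
    (∑ x, if restr αᶜ x = b ∧ restr α x = a then g x else 0) = g (glue α a b) := by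
  have hiff : ∀ x : ∀ i, 𝓧 i, (restr αᶜ x = b ∧ restr α x = a) ↔ x = glue α a b := by
    intro x
    constructor
    · rintro ⟨h1, h2⟩
      conv_lhs => rw [← glue_restr α x]
      rw [h1, h2]
    · rintro rfl
      exact ⟨restr_glue₂ α a b, restr_glue₁ α a b⟩
  calc (∑ x, if restr αᶜ x = b ∧ restr α x = a then g x else 0)
      = ∑ x, if x = glue α a b then g x else 0 :=
        Finset.sum_congr rfl fun x _ => by rw [if_congr (hiff x) rfl rfl]
    _ = g (glue α a b) := by rw [Finset.sum_ite_eq' univ]; simp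

end Reduction
/-- if `V - X - Y` is a Markov chain and `V ⫫ X^α`, then
`I(V;Y) ≤ I(Y; X^{-α} | X^α)`. -/
theorem synergy_upper_bound
    {n : ℕ} {𝓧 : Fin n → Type*} [∀ i, Fintype (𝓧 i)]
    {V Y : Type*} [Fintype V] [Fintype Y]
    (q : V → (∀ i, 𝓧 i) → Y → ℝ) (α : Finset (Fin n))
    (hpos : ∀ v x y, 0 ≤ q v x y)
    (hsum : ∑ v, ∑ x, ∑ y, q v x y = 1)
    (hmc : MarkovChain q)
    (hind : IndepWithFun (fun v x => ∑ y, q v x y) (restr (𝓧 := 𝓧) α)) :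
    MI (fun v y => ∑ x, q v x y) ≤
      CMI (fun (y : Y) (b : ∀ i : ↥αᶜ, 𝓧 i.1) (a : ∀ i : ↥α, 𝓧 i.1) =>
        ∑ v, ∑ x, if restr αᶜ x = b ∧ restr α x = a then q v x y else 0) := by
  classical
  set p4 : V → (∀ i : ↥α, 𝓧 i.1) → (∀ i : ↥αᶜ, 𝓧 i.1) → Y → ℝ :=
    fun v a b y => q v (glue α a b) y with hp4
  have hMIeq : (fun v y => ∑ x, q v x y) = fun v y => ∑ a, ∑ b, p4 v a b y := by
    funext v y
    exact sum_glue α (fun x => q v x y)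
  have hCMIeq : (fun (y : Y) (b : ∀ i : ↥αᶜ, 𝓧 i.1) (a : ∀ i : ↥α, 𝓧 i.1) =>
        ∑ v, ∑ x, if restr αᶜ x = b ∧ restr α x = a then q v x y else 0)
      = fun y b a => ∑ v, p4 v a b y := by
    funext y b a
    exact Finset.sum_congr rfl fun v _ => sum_if_glue α (fun x => q v x y) a b
  rw [hMIeq, hCMIeq]
  apply key_lemma
  · intro v a b y
    exact hpos v (glue α a b) y
  · have : ∀ v, (∑ a, ∑ b, ∑ y, p4 v a b y) = ∑ x, ∑ y, q v x y :=
      fun v => (sum_glue α (fun x => ∑ y, q v x y)).symm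
    rw [Finset.sum_congr rfl fun v _ => this v]
    exact hsum
  · intro v a b y
    exact hmc v (glue α a b) y
  · intro v a
    have key1 : ∀ v' : V,
        (∑ x, if restr α x = a then (∑ y, q v' x y) else 0) = ∑ b, ∑ y, p4 v' a b y := by
      intro v'
      rw [sum_glue α (fun x => if restr α x = a then (∑ y, q v' x y) else 0)]
      have hre : ∀ (a' : ∀ i : ↥α, 𝓧 i.1) (b : ∀ i : ↥αᶜ, 𝓧 i.1),
          (if restr α (glue α a' b) = a then (∑ y, q v' (glue α a' b) y) else 0)
            = if a' = a then (∑ y, p4 v' a' b y) else 0 := by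
        intro a' b
        rw [restr_glue₁]
      simp only [hre]
      rw [Finset.sum_comm]
      refine (Finset.sum_congr rfl fun b _ => ?_ : _ = ∑ b, ∑ y, p4 v' a b y)
      rw [Finset.sum_ite_eq' univ a (fun a' => ∑ y, p4 v' a' b y)]
      simp
    have key2 : (∑ x, ∑ y, q v x y) = ∑ a', ∑ b, ∑ y, p4 v a' b y :=
      sum_glue α (fun x => ∑ y, q v x y)
    have h := hind v a
    simp only [] at h
    rw [key1 v, key2, Finset.sum_congr rfl fun v' _ => key1 v'] at h
    exact h
end

section
/- Let X, Y be discrete random variables and V such that V - X - Y is a Markov chain and V is independent of X^α for subsets α in a collection 𝛂 = {α_1,...,α_L}. Then I(X;Y) - I(V;Y) ≥ max_{j} I(X^{α_j}; Y). -/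
open Finset
open scoped BigOperators Classical

private lemma ite_zero_mul_self (t c : ℝ) {h : Decidable (t = 0)} :
    (@ite ℝ (t = 0) h 0 (t * c)) = t * c := by
  split <;> simp [*]

/-- MI without the if. -/
private lemma MI_eq {A B : Type*} [Fintype A] [Fintype B] (p : A → B → ℝ) :
    MI p = ∑ a, ∑ b,
      p a b * Real.logb 2 (p a b / ((∑ b', p a b') * (∑ a', p a' b))) := by
  unfold MI
  refine Finset.sum_congr rfl fun a _ => Finset.sum_congr rfl fun b _ => ?_
  exact ite_zero_mul_self _ _

/-- Gibbs' inequality / log-sum. -/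
private lemma gibbs {I : Type*} [Fintype I] (p u : I → ℝ)
    (hp : ∀ i, 0 ≤ p i) (hu : ∀ i, 0 ≤ u i)
    (hac : ∀ i, p i ≠ 0 → u i ≠ 0)
    (hle : ∑ i, u i ≤ ∑ i, p i) :
    0 ≤ ∑ i, p i * Real.logb 2 (p i / u i) := by
  have hlog2 : (0:ℝ) < Real.log 2 := Real.log_pos (by norm_num)
  have key : ∀ i, (p i - u i) / Real.log 2 ≤ p i * Real.logb 2 (p i / u i) := by
    intro i
    rcases eq_or_ne (p i) 0 with h0 | h0
    · rw [h0]
      simp only [zero_mul, zero_sub]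
      apply div_nonpos_of_nonpos_of_nonneg _ hlog2.le
      linarith [hu i]
    · have hpi : 0 < p i := (hp i).lt_of_ne (Ne.symm h0)
      have hui : 0 < u i := (hu i).lt_of_ne (Ne.symm (hac i h0))
      have h2 : 1 - u i / p i ≤ Real.log (p i / u i) := by
        have h1 := Real.log_le_sub_one_of_pos (show (0:ℝ) < u i / p i by positivity)
        rw [Real.log_div hui.ne' hpi.ne'] at h1
        rw [Real.log_div hpi.ne' hui.ne']
        linarith
      have h3 : p i - u i ≤ p i * Real.log (p i / u i) := by
        have h4 := mul_le_mul_of_nonneg_left h2 hpi.le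
        have h5 : p i * (1 - u i / p i) = p i - u i := by field_simp
        linarith
      rw [Real.logb, ← mul_div_assoc, div_le_div_iff₀ hlog2 hlog2]
      nlinarith
  calc (0:ℝ) ≤ ∑ i, (p i - u i) / Real.log 2 := by
        rw [← Finset.sum_div, Finset.sum_sub_distrib]
        apply div_nonneg _ hlog2.le
        linarith
    _ ≤ ∑ i, p i * Real.logb 2 (p i / u i) := Finset.sum_le_sum fun i _ => key i

private lemma sum_swap12 {M : Type*} [AddCommMonoid M] {A B C : Type*}
    [Fintype A] [Fintype B] [Fintype C] (g : A → B → C → M) :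
    ∑ a, ∑ b, ∑ c, g a b c = ∑ b, ∑ a, ∑ c, g a b c := Finset.sum_comm

private lemma sum_swap23 {M : Type*} [AddCommMonoid M] {A B C : Type*}
    [Fintype A] [Fintype B] [Fintype C] (g : A → B → C → M) :
    ∑ a, ∑ b, ∑ c, g a b c = ∑ a, ∑ c, ∑ b, g a b c :=
  Finset.sum_congr rfl fun _ _ => Finset.sum_comm

private lemma ite_sum {A : Type*} [Fintype A] (c : Prop) [Decidable c] (g : A → ℝ) :
    (if c then (∑ a, g a) else 0) = ∑ a, if c then g a else 0 := by
  split <;> simp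


private lemma sum_perm3 {M : Type*} [AddCommMonoid M] {A B C : Type*}
    [Fintype A] [Fintype B] [Fintype C] (g : A → B → C → M) :
    ∑ a, ∑ b, ∑ c, g a b c = ∑ c, ∑ a, ∑ b, g a b c := by
  calc ∑ a, ∑ b, ∑ c, g a b c
      = ∑ a, ∑ c, ∑ b, g a b c := Finset.sum_congr rfl fun a _ => Finset.sum_comm
    _ = ∑ c, ∑ a, ∑ b, g a b c := Finset.sum_comm

private lemma sum_perm4 {M : Type*} [AddCommMonoid M] {A B C D : Type*}
    [Fintype A] [Fintype B] [Fintype C] [Fintype D] (g : A → B → C → D → M) :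
    ∑ a, ∑ b, ∑ c, ∑ d, g a b c d = ∑ c, ∑ d, ∑ b, ∑ a, g a b c d := by
  calc ∑ a, ∑ b, ∑ c, ∑ d, g a b c d
      = ∑ b, ∑ a, ∑ c, ∑ d, g a b c d := Finset.sum_comm
    _ = ∑ b, ∑ c, ∑ a, ∑ d, g a b c d :=
        Finset.sum_congr rfl fun b _ => Finset.sum_comm
    _ = ∑ b, ∑ c, ∑ d, ∑ a, g a b c d :=
        Finset.sum_congr rfl fun b _ => Finset.sum_congr rfl fun c _ => Finset.sum_comm
    _ = ∑ c, ∑ b, ∑ d, ∑ a, g a b c d := Finset.sum_comm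
    _ = ∑ c, ∑ d, ∑ b, ∑ a, g a b c d :=
        Finset.sum_congr rfl fun c _ => Finset.sum_comm

section Aux

variable {V X Y T : Type*} [Fintype V] [Fintype X] [Fintype Y] [Fintype T]

private def pXY (q : V → X → Y → ℝ) (x : X) (y : Y) : ℝ := ∑ v, q v x y
private def pVX (q : V → X → Y → ℝ) (v : V) (x : X) : ℝ := ∑ y, q v x y
private def pVY (q : V → X → Y → ℝ) (v : V) (y : Y) : ℝ := ∑ x, q v x y
private def pX (q : V → X → Y → ℝ) (x : X) : ℝ := ∑ v, pVX q v x
private def pV (q : V → X → Y → ℝ) (v : V) : ℝ := ∑ x, pVX q v x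
private def pY (q : V → X → Y → ℝ) (y : Y) : ℝ := ∑ v, pVY q v y
private noncomputable def pTY (f : X → T) (q : V → X → Y → ℝ) (t : T) (y : Y) : ℝ :=
  ∑ v, ∑ x, if f x = t then q v x y else 0
private noncomputable def pT (f : X → T) (q : V → X → Y → ℝ) (t : T) : ℝ := ∑ y, pTY f q t y
private noncomputable def tv (f : X → T) (q : V → X → Y → ℝ) (v : V) (t : T) : ℝ :=
  ∑ x, if f x = t then pVX q v x else 0
private noncomputable def UU (f : X → T) (q : V → X → Y → ℝ) (v : V) (x : X) (y : Y) : ℝ :=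
  pVX q v x * pVY q v y * pTY f q (f x) y / (tv f q v (f x) * pY q y)

variable (f : X → T) (q : V → X → Y → ℝ)

/-- `∑_v tv = pT`. -/
private lemma sum_tv (t : T) : ∑ v, tv f q v t = pT f q t := by
  unfold tv pT pTY pVX
  simp only [ite_sum]
  rw [sum_swap23, sum_swap12]

/-- `∑_t pTY = pY`. -/
private lemma sum_pTY (y : Y) : ∑ t, pTY f q t y = pY q y := by
  unfold pTY pY pVY
  rw [sum_swap12]
  refine Finset.sum_congr rfl fun v _ => ?_
  rw [Finset.sum_comm]
  refine Finset.sum_congr rfl fun x _ => ?_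
  simp [Finset.sum_ite_eq]

/-- `∑_y pY = 1`. -/
private lemma sum_pY (hsum : ∑ v, ∑ x, ∑ y, q v x y = 1) : ∑ y, pY q y = 1 := by
  unfold pY pVY
  rw [sum_swap12, sum_swap23]
  exact hsum

private lemma E1 :
    MI (fun (x : X) (y : Y) => ∑ v, q v x y) =
      ∑ v, ∑ x, ∑ y, q v x y * Real.logb 2 (pXY q x y / (pX q x * pY q y)) := by
  simp only [MI_eq]
  calc ∑ x, ∑ y, (∑ v, q v x y) *
        Real.logb 2 ((∑ v, q v x y) / ((∑ y', ∑ v, q v x y') * (∑ x', ∑ v, q v x' y)))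
      = ∑ x, ∑ y, ∑ v, q v x y * Real.logb 2 (pXY q x y / (pX q x * pY q y)) := by
        refine Finset.sum_congr rfl fun x _ => Finset.sum_congr rfl fun y _ => ?_
        rw [show (∑ y', ∑ v, q v x y') = pX q x from Finset.sum_comm,
          show (∑ x', ∑ v, q v x' y) = pY q y from Finset.sum_comm,
          show (∑ v, q v x y) = pXY q x y from rfl]
        exact Finset.sum_mul _ _ _
    _ = ∑ v, ∑ x, ∑ y, q v x y * Real.logb 2 (pXY q x y / (pX q x * pY q y)) :=
        sum_perm3 _

private lemma E2 :
    MI (fun (v : V) (y : Y) => ∑ x, q v x y) =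
      ∑ v, ∑ x, ∑ y, q v x y * Real.logb 2 (pVY q v y / (pV q v * pY q y)) := by
  simp only [MI_eq]
  calc ∑ v, ∑ y, (∑ x, q v x y) *
        Real.logb 2 ((∑ x, q v x y) / ((∑ y', ∑ x, q v x y') * (∑ v', ∑ x, q v' x y)))
      = ∑ v, ∑ y, ∑ x, q v x y * Real.logb 2 (pVY q v y / (pV q v * pY q y)) := by
        refine Finset.sum_congr rfl fun v _ => Finset.sum_congr rfl fun y _ => ?_
        rw [show (∑ y', ∑ x, q v x y') = pV q v from Finset.sum_comm,
          show (∑ v', ∑ x, q v' x y) = pY q y from rfl,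
          show (∑ x, q v x y) = pVY q v y from rfl]
        exact Finset.sum_mul _ _ _
    _ = ∑ v, ∑ x, ∑ y, q v x y * Real.logb 2 (pVY q v y / (pV q v * pY q y)) :=
        Finset.sum_congr rfl fun v _ => Finset.sum_comm

private lemma E3 :
    MI (fun (t : T) (y : Y) => ∑ v, ∑ x, if f x = t then q v x y else 0) =
      ∑ v, ∑ x, ∑ y, q v x y *
        Real.logb 2 (pTY f q (f x) y / (pT f q (f x) * pY q y)) := by
  simp only [MI_eq]
  calc ∑ t, ∑ y, (∑ v, ∑ x, if f x = t then q v x y else 0) *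
        Real.logb 2 ((∑ v, ∑ x, if f x = t then q v x y else 0) /
          ((∑ y', ∑ v, ∑ x, if f x = t then q v x y' else 0) *
            (∑ t', ∑ v, ∑ x, if f x = t' then q v x y else 0)))
      = ∑ t, ∑ y, ∑ v, ∑ x, if f x = t then
          q v x y * Real.logb 2 (pTY f q t y / (pT f q t * pY q y)) else 0 := by
        refine Finset.sum_congr rfl fun t _ => Finset.sum_congr rfl fun y _ => ?_
        rw [show (∑ t', ∑ v, ∑ x, if f x = t' then q v x y else 0) = pY q y from
            sum_pTY f q y]
        rw [Finset.sum_mul]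
        refine Finset.sum_congr rfl fun v _ => ?_
        rw [Finset.sum_mul]
        refine Finset.sum_congr rfl fun x _ => ?_
        rw [ite_mul, zero_mul]
        rfl
    _ = ∑ v, ∑ x, ∑ y, ∑ t, if f x = t then
          q v x y * Real.logb 2 (pTY f q t y / (pT f q t * pY q y)) else 0 := by
        exact sum_perm4 _
    _ = ∑ v, ∑ x, ∑ y, q v x y *
          Real.logb 2 (pTY f q (f x) y / (pT f q (f x) * pY q y)) := by
        refine Finset.sum_congr rfl fun v _ => Finset.sum_congr rfl fun x _ =>
          Finset.sum_congr rfl fun y _ => ?_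
        simp [Finset.sum_ite_eq]

private lemma pVX_nonneg (hpos : ∀ v x y, 0 ≤ q v x y) (v : V) (x : X) :
    0 ≤ pVX q v x := Finset.sum_nonneg fun y _ => hpos v x y

private lemma pVY_nonneg (hpos : ∀ v x y, 0 ≤ q v x y) (v : V) (y : Y) :
    0 ≤ pVY q v y := Finset.sum_nonneg fun x _ => hpos v x y

private lemma pY_nonneg (hpos : ∀ v x y, 0 ≤ q v x y) (y : Y) :
    0 ≤ pY q y := Finset.sum_nonneg fun v _ => pVY_nonneg q hpos v y

private lemma pTY_nonneg (hpos : ∀ v x y, 0 ≤ q v x y) (t : T) (y : Y) :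
    0 ≤ pTY f q t y :=
  Finset.sum_nonneg fun v _ => Finset.sum_nonneg fun x _ => by
    split
    · exact hpos v x y
    · exact le_rfl

private lemma tv_nonneg (hpos : ∀ v x y, 0 ≤ q v x y) (v : V) (t : T) :
    0 ≤ tv f q v t :=
  Finset.sum_nonneg fun x _ => by
    split
    · exact pVX_nonneg q hpos v x
    · exact le_rfl

private lemma UU_nonneg (hpos : ∀ v x y, 0 ≤ q v x y) (v : V) (x : X) (y : Y) :
    0 ≤ UU f q v x y := by
  unfold UU
  apply div_nonneg _ (mul_nonneg (tv_nonneg f q hpos v (f x)) (pY_nonneg q hpos y))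
  exact mul_nonneg (mul_nonneg (pVX_nonneg q hpos v x) (pVY_nonneg q hpos v y))
    (pTY_nonneg f q hpos (f x) y)

/-- All the strict positivity facts on the support. -/
private lemma pos_facts (hpos : ∀ v x y, 0 ≤ q v x y) {v : V} {x : X} {y : Y}
    (hq : q v x y ≠ 0) :
    0 < pXY q x y ∧ 0 < pVX q v x ∧ 0 < pVY q v y ∧ 0 < pX q x ∧ 0 < pV q v ∧
      0 < pY q y ∧ 0 < pTY f q (f x) y ∧ 0 < pT f q (f x) ∧ 0 < tv f q v (f x) := by
  have ha : 0 < q v x y := (hpos v x y).lt_of_ne (Ne.symm hq)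
  have hXY : q v x y ≤ pXY q x y :=
    Finset.single_le_sum (fun i _ => hpos i x y) (Finset.mem_univ v)
  have hVX : q v x y ≤ pVX q v x :=
    Finset.single_le_sum (fun i _ => hpos v x i) (Finset.mem_univ y)
  have hVY : q v x y ≤ pVY q v y :=
    Finset.single_le_sum (fun i _ => hpos v i y) (Finset.mem_univ x)
  have hX : pVX q v x ≤ pX q x :=
    Finset.single_le_sum (fun i _ => pVX_nonneg q hpos i x) (Finset.mem_univ v)
  have hV : pVX q v x ≤ pV q v :=
    Finset.single_le_sum (fun i _ => pVX_nonneg q hpos v i) (Finset.mem_univ x)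
  have hY : pVY q v y ≤ pY q y :=
    Finset.single_le_sum (fun i _ => pVY_nonneg q hpos i y) (Finset.mem_univ v)
  have hTY : q v x y ≤ pTY f q (f x) y := by
    have h1 : q v x y ≤ ∑ x', if f x' = f x then q v x' y else 0 := by
      have := Finset.single_le_sum (f := fun x' => if f x' = f x then q v x' y else 0)
        (fun i _ => by split; exacts [hpos v i y, le_rfl]) (Finset.mem_univ x)
      simpa using this
    refine h1.trans ?_
    exact Finset.single_le_sum
      (f := fun v' => ∑ x', if f x' = f x then q v' x' y else 0)
      (fun i _ => Finset.sum_nonneg fun x' _ => by split; exacts [hpos i x' y, le_rfl])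
      (Finset.mem_univ v)
  have hT : pTY f q (f x) y ≤ pT f q (f x) :=
    Finset.single_le_sum (fun i _ => pTY_nonneg f q hpos (f x) i) (Finset.mem_univ y)
  have htv : pVX q v x ≤ tv f q v (f x) := by
    have := Finset.single_le_sum (f := fun x' => if f x' = f x then pVX q v x' else 0)
      (fun i _ => by split; exacts [pVX_nonneg q hpos v i, le_rfl]) (Finset.mem_univ x)
    simpa [tv] using this
  refine ⟨ha.trans_le hXY, ha.trans_le hVX, ha.trans_le hVY, ?_, ?_, ?_,
    ha.trans_le hTY, ?_, ?_⟩
  · exact (ha.trans_le hVX).trans_le hX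
  · exact (ha.trans_le hVX).trans_le hV
  · exact (ha.trans_le hVY).trans_le hY
  · exact (ha.trans_le hTY).trans_le hT
  · exact (ha.trans_le hVX).trans_le htv

/-- The pointwise identity on the support. -/
private lemma key_eq (hpos : ∀ v x y, 0 ≤ q v x y) (hmc : MarkovChain q)
    (hind : IndepWithFun (fun v x => ∑ y, q v x y) f) (v : V) (x : X) (y : Y) :
    q v x y * Real.logb 2 (pXY q x y / (pX q x * pY q y)) -
      q v x y * Real.logb 2 (pVY q v y / (pV q v * pY q y)) -
      q v x y * Real.logb 2 (pTY f q (f x) y / (pT f q (f x) * pY q y)) =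
    q v x y * Real.logb 2 (q v x y / UU f q v x y) := by
  rcases eq_or_ne (q v x y) 0 with hq | hq
  · rw [hq]; ring
  obtain ⟨hXY, hVX, hVY, hX, hV, hY, hTY, hT, htv⟩ := pos_facts f q hpos hq
  have ha : 0 < q v x y := (hpos v x y).lt_of_ne (Ne.symm hq)
  have hM : q v x y * pX q x = pVX q v x * pXY q x y := hmc v x y
  have hI : tv f q v (f x) = pV q v * (∑ v', tv f q v' (f x)) := hind v (f x)
  rw [sum_tv f q (f x)] at hI
  have hA : (0:ℝ) < pXY q x y / (pX q x * pY q y) := by positivity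
  have hB : (0:ℝ) < pVY q v y / (pV q v * pY q y) := by positivity
  have hC : (0:ℝ) < pTY f q (f x) y / (pT f q (f x) * pY q y) := by positivity
  have hL : Real.logb 2 (pXY q x y / (pX q x * pY q y)) -
      Real.logb 2 (pVY q v y / (pV q v * pY q y)) -
      Real.logb 2 (pTY f q (f x) y / (pT f q (f x) * pY q y)) =
      Real.logb 2 (q v x y / UU f q v x y) := by
    rw [← Real.logb_div hA.ne' hB.ne', ← Real.logb_div (div_pos hA hB).ne' hC.ne']
    congr 1
    unfold UU
    rw [hI]
    field_simp
    ring_nf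
    linear_combination (-1 : ℝ) * hM
  calc q v x y * Real.logb 2 (pXY q x y / (pX q x * pY q y)) -
        q v x y * Real.logb 2 (pVY q v y / (pV q v * pY q y)) -
        q v x y * Real.logb 2 (pTY f q (f x) y / (pT f q (f x) * pY q y))
      = q v x y * (Real.logb 2 (pXY q x y / (pX q x * pY q y)) -
          Real.logb 2 (pVY q v y / (pV q v * pY q y)) -
          Real.logb 2 (pTY f q (f x) y / (pT f q (f x) * pY q y))) := by ring
    _ = q v x y * Real.logb 2 (q v x y / UU f q v x y) := by rw [hL]

/-- The total mass of `UU` is at most `1`. -/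
private lemma sum_UU_le (hpos : ∀ v x y, 0 ≤ q v x y)
    (hsum : ∑ v, ∑ x, ∑ y, q v x y = 1) :
    ∑ v, ∑ x, ∑ y, UU f q v x y ≤ 1 := by
  have step1 : ∀ v y, ∑ x, UU f q v x y =
      ∑ t, tv f q v t * (pVY q v y * pTY f q t y / (tv f q v t * pY q y)) := by
    intro v y
    unfold UU
    calc ∑ x, pVX q v x * pVY q v y * pTY f q (f x) y / (tv f q v (f x) * pY q y)
        = ∑ x, ∑ t, if f x = t then
            pVX q v x * pVY q v y * pTY f q t y / (tv f q v t * pY q y) else 0 := by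
          refine Finset.sum_congr rfl fun x _ => ?_
          symm
          simp [Finset.sum_ite_eq]
      _ = ∑ t, ∑ x, if f x = t then
            pVX q v x * pVY q v y * pTY f q t y / (tv f q v t * pY q y) else 0 :=
          Finset.sum_comm
      _ = ∑ t, tv f q v t * (pVY q v y * pTY f q t y / (tv f q v t * pY q y)) := by
          refine Finset.sum_congr rfl fun t _ => ?_
          rw [show tv f q v t * (pVY q v y * pTY f q t y / (tv f q v t * pY q y)) =
            ∑ x, (if f x = t then pVX q v x else 0) *
              (pVY q v y * pTY f q t y / (tv f q v t * pY q y)) from Finset.sum_mul _ _ _]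
          refine Finset.sum_congr rfl fun x _ => ?_
          rw [ite_mul, zero_mul]
          split
          · rw [mul_assoc, mul_div_assoc]
          · rfl
  have step2 : ∀ v t y, tv f q v t * (pVY q v y * pTY f q t y / (tv f q v t * pY q y)) ≤
      pVY q v y * pTY f q t y / pY q y := by
    intro v t y
    rcases eq_or_ne (tv f q v t) 0 with h | h
    · rw [h, zero_mul]
      apply div_nonneg (mul_nonneg (pVY_nonneg q hpos v y) (pTY_nonneg f q hpos t y))
        (pY_nonneg q hpos y)
    · rcases eq_or_ne (pY q y) 0 with h0 | h0
      · simp [h0]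
      · rw [show tv f q v t * (pVY q v y * pTY f q t y / (tv f q v t * pY q y)) =
            pVY q v y * pTY f q t y / pY q y from by field_simp]
  calc ∑ v, ∑ x, ∑ y, UU f q v x y
      = ∑ v, ∑ y, ∑ x, UU f q v x y := Finset.sum_congr rfl fun v _ => Finset.sum_comm
    _ = ∑ v, ∑ y, ∑ t, tv f q v t * (pVY q v y * pTY f q t y / (tv f q v t * pY q y)) :=
        Finset.sum_congr rfl fun v _ => Finset.sum_congr rfl fun y _ => step1 v y
    _ ≤ ∑ v, ∑ y, ∑ t, pVY q v y * pTY f q t y / pY q y :=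
        Finset.sum_le_sum fun v _ => Finset.sum_le_sum fun y _ =>
          Finset.sum_le_sum fun t _ => step2 v t y
    _ = ∑ y, ∑ v, ∑ t, pVY q v y * pTY f q t y / pY q y :=
        sum_swap12 fun v y t => pVY q v y * pTY f q t y / pY q y
    _ ≤ ∑ y, pY q y := by
        refine Finset.sum_le_sum fun y _ => ?_
        have : ∑ v, ∑ t, pVY q v y * pTY f q t y / pY q y = pY q y * pY q y / pY q y := by
          calc ∑ v, ∑ t, pVY q v y * pTY f q t y / pY q y
              = ∑ v, (∑ t, pVY q v y * pTY f q t y) / pY q y :=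
                Finset.sum_congr rfl fun v _ => (Finset.sum_div _ _ _).symm
            _ = (∑ v, ∑ t, pVY q v y * pTY f q t y) / pY q y :=
                (Finset.sum_div _ _ _).symm
            _ = (∑ v, pVY q v y) * (∑ t, pTY f q t y) / pY q y := by
                rw [Finset.sum_mul_sum]
            _ = pY q y * pY q y / pY q y := by
                rw [sum_pTY f q y]
                rfl
        rw [this]
        rcases eq_or_ne (pY q y) 0 with h0 | h0
        · simp [h0]
        · rw [mul_div_assoc, div_self h0, mul_one]
    _ = 1 := sum_pY q hsum

private lemma aux_main (hpos : ∀ v x y, 0 ≤ q v x y)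
    (hsum : ∑ v, ∑ x, ∑ y, q v x y = 1)
    (hmc : MarkovChain q)
    (hind : IndepWithFun (fun v x => ∑ y, q v x y) f) :
    MI (fun (t : T) (y : Y) => ∑ v, ∑ x, if f x = t then q v x y else 0) ≤
      MI (fun (x : X) (y : Y) => ∑ v, q v x y) - MI (fun v y => ∑ x, q v x y) := by
  rw [← sub_nonneg, E1 q, E2 q, E3 f q]
  have combine : (∑ v, ∑ x, ∑ y, q v x y * Real.logb 2 (pXY q x y / (pX q x * pY q y))) -
      (∑ v, ∑ x, ∑ y, q v x y * Real.logb 2 (pVY q v y / (pV q v * pY q y))) -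
      (∑ v, ∑ x, ∑ y, q v x y *
        Real.logb 2 (pTY f q (f x) y / (pT f q (f x) * pY q y))) =
      ∑ v, ∑ x, ∑ y, q v x y * Real.logb 2 (q v x y / UU f q v x y) := by
    simp only [← Finset.sum_sub_distrib]
    exact Finset.sum_congr rfl fun v _ => Finset.sum_congr rfl fun x _ =>
      Finset.sum_congr rfl fun y _ => key_eq f q hpos hmc hind v x y
  rw [combine]
  have hg := gibbs (I := V × X × Y) (fun i => q i.1 i.2.1 i.2.2)
    (fun i => UU f q i.1 i.2.1 i.2.2)
    (fun i => hpos i.1 i.2.1 i.2.2)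
    (fun i => UU_nonneg f q hpos i.1 i.2.1 i.2.2)
    (fun i hi => by
      have h := pos_facts f q hpos (v := i.1) (x := i.2.1) (y := i.2.2) hi
      have : 0 < UU f q i.1 i.2.1 i.2.2 := by
        obtain ⟨h1, h2, h3, h4, h5, h6, h7, h8, h9⟩ := h
        unfold UU
        positivity
      exact this.ne')
    (by
      rw [Fintype.sum_prod_type, Fintype.sum_prod_type]
      simp only [Fintype.sum_prod_type]
      calc ∑ v, ∑ x, ∑ y, UU f q v x y ≤ 1 := sum_UU_le f q hpos hsum
        _ = ∑ v, ∑ x, ∑ y, q v x y := hsum.symm)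
  rw [Fintype.sum_prod_type] at hg
  simp only [Fintype.sum_prod_type] at hg
  exact hg


end Aux

set_option maxHeartbeats 1000000 in
/-- if `V - X - Y` is a Markov chain and `V ⫫ X^α` for all `α` in a
collection `A`, then `I(X;Y) - I(V;Y) ≥ max_{α ∈ A} I(X^α; Y)`. -/
theorem non_synergistic_lower_bound
    {n : ℕ} {𝓧 : Fin n → Type*} [∀ i, Fintype (𝓧 i)]
    {V Y : Type*} [Fintype V] [Fintype Y]
    (q : V → (∀ i, 𝓧 i) → Y → ℝ)
    (A : Finset (Finset (Fin n))) (hA : A.Nonempty)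
    (hpos : ∀ v x y, 0 ≤ q v x y)
    (hsum : ∑ v, ∑ x, ∑ y, q v x y = 1)
    (hmc : MarkovChain q)
    (hind : ∀ α ∈ A, IndepWithFun (fun v x => ∑ y, q v x y) (restr (𝓧 := 𝓧) α)) :
    MI (fun (x : ∀ i, 𝓧 i) (y : Y) => ∑ v, q v x y) - MI (fun v y => ∑ x, q v x y) ≥
      A.sup' hA (fun α => MI (fun (a : ∀ i : ↥α, 𝓧 i.1) (y : Y) =>
        ∑ v, ∑ x, if restr α x = a then q v x y else 0)) := by
  rw [ge_iff_le, Finset.sup'_le_iff]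
  intro α hα
  have h := aux_main (restr (𝓧 := 𝓧) α) q hpos hsum hmc (hind α hα)
  convert h using 2
  · exact rfl
  funext a y
  refine Finset.sum_congr rfl fun v _ => Finset.sum_congr rfl fun x _ => ?_
  congr
end

section
/- Target data processing inequality for synergy: if X - Y - Z is a Markov chain, then S^𝛂(X → Y) ≥ S^𝛂(X → Z). -/
open Finset
open scoped BigOperators Classical

private lemma log_two_pos' : (0:ℝ) < Real.log 2 := Real.log_pos one_lt_two

lemma gibbs_term_s8 {a b : ℝ} (ha : 0 ≤ a) (hb : 0 ≤ b) (hab : a ≠ 0 → 0 < b) :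
    (a - b) / Real.log 2 ≤ (if a = 0 then 0 else a * Real.logb 2 (a / b)) := by
  rcases eq_or_ne a 0 with h | h
  · rw [if_pos h, h]
    apply div_nonpos_of_nonpos_of_nonneg (by linarith) log_two_pos'.le
  · have ha' : 0 < a := lt_of_le_of_ne ha (Ne.symm h)
    have hb' : 0 < b := hab h
    have h1 : Real.log (b/a) ≤ b/a - 1 := Real.log_le_sub_one_of_pos (by positivity)
    have h2 : Real.log (a/b) = - Real.log (b/a) := by
      rw [← Real.log_inv, inv_div]
    have h3 : a * (b/a - 1) = b - a := by field_simp
    have key : a - b ≤ a * Real.log (a/b) := by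
      rw [h2]
      nlinarith [mul_le_mul_of_nonneg_left h1 ha]
    rw [if_neg h, Real.logb, ← mul_div_assoc]
    exact (div_le_div_iff_of_pos_right log_two_pos').mpr key

lemma gibbs_sum {ι : Type*} [Fintype ι] (f b : ι → ℝ) (hf : ∀ i, 0 ≤ f i)
    (hb : ∀ i, 0 ≤ b i) (hp : ∀ i, f i ≠ 0 → 0 < b i)
    (hsum : ∑ i, b i ≤ ∑ i, f i) :
    0 ≤ ∑ i, (if f i = 0 then 0 else f i * Real.logb 2 (f i / b i)) := by
  have h := Finset.sum_le_sum (fun i (_ : i ∈ Finset.univ) => gibbs_term_s8 (hf i) (hb i) (hp i))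
  refine le_trans ?_ h
  rw [← Finset.sum_div, Finset.sum_sub_distrib]
  apply div_nonneg (by linarith) log_two_pos'.le

lemma MI_le {A B : Type*} [Fintype A] [Fintype B] (p : A → B → ℝ)
    (hp : ∀ a b, 0 ≤ p a b) (h1 : ∑ a, ∑ b, p a b = 1) :
    MI p ≤ (Fintype.card B : ℝ) / Real.log 2 := by
  have hpbn : ∀ b, 0 ≤ ∑ a, p a b := fun b => Finset.sum_nonneg fun a _ => hp a b
  have hple : ∀ a b, p a b ≤ ∑ b', p a b' := fun a b =>
    Finset.single_le_sum (fun b' _ => hp a b') (Finset.mem_univ b)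
  have hplepb : ∀ a b, p a b ≤ ∑ a', p a' b := fun a b =>
    Finset.single_le_sum (fun a' _ => hp a' b) (Finset.mem_univ a)
  have hpb1 : ∀ b, (∑ a, p a b) ≤ 1 := by
    intro b
    calc (∑ a, p a b) ≤ ∑ b', ∑ a, p a b' :=
          Finset.single_le_sum (fun b' _ => hpbn b') (Finset.mem_univ b)
      _ = 1 := by rw [Finset.sum_comm]; exact h1
  have step1 : MI p ≤ ∑ a, ∑ b, -(p a b * Real.logb 2 (∑ a', p a' b)) := by
    apply Finset.sum_le_sum; intro a _
    apply Finset.sum_le_sum; intro b _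
    rcases eq_or_ne (p a b) 0 with h | h
    · simp [h]
    · rw [if_neg h]
      have hppos : 0 < p a b := lt_of_le_of_ne (hp a b) (Ne.symm h)
      have hpa : 0 < ∑ b', p a b' := lt_of_lt_of_le hppos (hple a b)
      have hpbp : 0 < ∑ a', p a' b := lt_of_lt_of_le hppos (hplepb a b)
      have harg : p a b / ((∑ b', p a b') * (∑ a', p a' b)) ≤ 1 / (∑ a', p a' b) := by
        rw [div_le_div_iff₀ (by positivity) hpbp]
        nlinarith [mul_le_mul_of_nonneg_right (hple a b) hpbp.le]
      have hlog : Real.logb 2 (p a b / ((∑ b', p a b') * (∑ a', p a' b)))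
          ≤ Real.logb 2 (1 / (∑ a', p a' b)) :=
        Real.logb_le_logb_of_le one_lt_two (by positivity) harg
      rw [one_div, Real.logb_inv] at hlog
      nlinarith [mul_le_mul_of_nonneg_left hlog hppos.le]
  have step2 : (∑ a, ∑ b, -(p a b * Real.logb 2 (∑ a', p a' b)))
      = ∑ b, -((∑ a, p a b) * Real.logb 2 (∑ a', p a' b)) := by
    rw [Finset.sum_comm]
    refine Finset.sum_congr rfl fun b _ => ?_
    simp only [← neg_mul]
    rw [← Finset.sum_mul, Finset.sum_neg_distrib, neg_mul]
  have step3 : (∑ b, -((∑ a, p a b) * Real.logb 2 (∑ a', p a' b)))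
      ≤ ∑ b : B, 1 / Real.log 2 := by
    apply Finset.sum_le_sum; intro b _
    rcases eq_or_ne (∑ a, p a b) 0 with h | h
    · rw [h]; simp; positivity
    · have hq : 0 < ∑ a, p a b := lt_of_le_of_ne (hpbn b) (Ne.symm h)
      have h4 : Real.log ((∑ a, p a b)⁻¹) ≤ (∑ a, p a b)⁻¹ - 1 :=
        Real.log_le_sub_one_of_pos (by positivity)
      rw [Real.log_inv] at h4
      rw [Real.logb, show -((∑ a, p a b) * (Real.log (∑ a', p a' b) / Real.log 2))
        = (-((∑ a, p a b) * Real.log (∑ a', p a' b))) / Real.log 2 from by ring,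
        div_le_div_iff_of_pos_right log_two_pos']
      have hinv : (∑ a, p a b) * (∑ a, p a b)⁻¹ = 1 := mul_inv_cancel₀ h
      nlinarith [mul_le_mul_of_nonneg_left h4 hq.le, hpb1 b]
  calc MI p ≤ _ := step1
    _ = _ := step2
    _ ≤ ∑ b : B, 1 / Real.log 2 := step3
    _ = (Fintype.card B : ℝ) / Real.log 2 := by
        rw [Finset.sum_const, Finset.card_univ, nsmul_eq_mul, mul_one_div]

lemma gibbs_sum3 {V Y Z : Type*} [Fintype V] [Fintype Y] [Fintype Z]
    (f b : V → Y → Z → ℝ)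
    (hf : ∀ v y z, 0 ≤ f v y z) (hb : ∀ v y z, 0 ≤ b v y z)
    (hp : ∀ v y z, f v y z ≠ 0 → 0 < b v y z)
    (hsum : ∑ v, ∑ y, ∑ z, b v y z ≤ ∑ v, ∑ y, ∑ z, f v y z) :
    0 ≤ ∑ v, ∑ y, ∑ z,
      (if f v y z = 0 then 0 else f v y z * Real.logb 2 (f v y z / b v y z)) := by
  have h := gibbs_sum (ι := V × Y × Z) (fun p => f p.1 p.2.1 p.2.2)
    (fun p => b p.1 p.2.1 p.2.2) (fun p => hf _ _ _) (fun p => hb _ _ _)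
    (fun p => hp _ _ _) (by simpa [Fintype.sum_prod_type] using hsum)
  simpa [Fintype.sum_prod_type] using h

lemma MI_dpi {V Y Z : Type*} [Fintype V] [Fintype Y] [Fintype Z]
    (Q : V → Y → Z → ℝ) (hQ : ∀ v y z, 0 ≤ Q v y z)
    (hs : ∑ v, ∑ y, ∑ z, Q v y z = 1)
    (hmc : ∀ v y z, Q v y z * (∑ v', ∑ z', Q v' y z') =
      (∑ z', Q v y z') * (∑ v', Q v' y z)) :
    MI (fun v z => ∑ y, Q v y z) ≤ MI (fun v y => ∑ z, Q v y z) := by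
  classical
  have key1 : MI (fun v y => ∑ z, Q v y z) = ∑ v, ∑ y, ∑ z,
      (if Q v y z = 0 then 0 else Q v y z * Real.logb 2
        ((∑ z', Q v y z') / ((∑ y', ∑ z', Q v y' z') * (∑ v', ∑ z', Q v' y z')))) := by
    unfold MI
    refine Finset.sum_congr rfl fun v _ => Finset.sum_congr rfl fun y _ => ?_
    have hrw : ∀ z : Z, (if Q v y z = 0 then 0 else Q v y z * Real.logb 2
        ((∑ z', Q v y z') / ((∑ y', ∑ z', Q v y' z') * (∑ v', ∑ z', Q v' y z'))))
        = Q v y z * Real.logb 2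
        ((∑ z', Q v y z') / ((∑ y', ∑ z', Q v y' z') * (∑ v', ∑ z', Q v' y z'))) := by
      intro z; split <;> simp_all
    rw [Finset.sum_congr rfl fun z _ => hrw z, ← Finset.sum_mul]
    split_ifs with h
    · have h' : ∑ z : Z, Q v y z = 0 := h
      rw [h', zero_mul]
    · rfl
  have key2 : MI (fun v z => ∑ y, Q v y z) = ∑ v, ∑ z, ∑ y,
      (if Q v y z = 0 then 0 else Q v y z * Real.logb 2
        ((∑ y', Q v y' z) / ((∑ z', ∑ y', Q v y' z') * (∑ v', ∑ y', Q v' y' z)))) := by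
    unfold MI
    refine Finset.sum_congr rfl fun v _ => ?_
    refine Finset.sum_congr rfl fun z _ => ?_
    have hrw : ∀ y : Y, (if Q v y z = 0 then 0 else Q v y z * Real.logb 2
        ((∑ y', Q v y' z) / ((∑ z', ∑ y', Q v y' z') * (∑ v', ∑ y', Q v' y' z))))
        = Q v y z * Real.logb 2
        ((∑ y', Q v y' z) / ((∑ z', ∑ y', Q v y' z') * (∑ v', ∑ y', Q v' y' z))) := by
      intro y; split <;> simp_all
    rw [Finset.sum_congr rfl fun y _ => hrw y, ← Finset.sum_mul]
    split_ifs with h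
    · have h' : ∑ y : Y, Q v y z = 0 := h
      rw [h', zero_mul]
    · rfl
  have key2' : (∑ v, ∑ z, ∑ y,
      (if Q v y z = 0 then 0 else Q v y z * Real.logb 2
        ((∑ y', Q v y' z) / ((∑ z', ∑ y', Q v y' z') * (∑ v', ∑ y', Q v' y' z)))))
      = ∑ v, ∑ y, ∑ z,
      (if Q v y z = 0 then 0 else Q v y z * Real.logb 2
        ((∑ y', Q v y' z) / ((∑ z', ∑ y', Q v y' z') * (∑ v', ∑ y', Q v' y' z)))) :=
    Finset.sum_congr rfl fun v _ => Finset.sum_comm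
  rw [key1, key2, key2', ← sub_nonneg, ← Finset.sum_sub_distrib]
  simp only [← Finset.sum_sub_distrib]
  have hstep : ∀ v y z,
      ((if Q v y z = 0 then 0 else Q v y z * Real.logb 2
        ((∑ z', Q v y z') / ((∑ y', ∑ z', Q v y' z') * (∑ v', ∑ z', Q v' y z'))))
      - (if Q v y z = 0 then 0 else Q v y z * Real.logb 2
        ((∑ y', Q v y' z) / ((∑ z', ∑ y', Q v y' z') * (∑ v', ∑ y', Q v' y' z)))))
      = (if Q v y z = 0 then 0 else Q v y z * Real.logb 2
        (Q v y z / ((∑ v', Q v' y z) * (∑ y', Q v y' z) / (∑ v', ∑ y', Q v' y' z)))) := by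
    intro v y z
    rcases eq_or_ne (Q v y z) 0 with h | h
    · simp [h]
    · rw [if_neg h, if_neg h, if_neg h, ← mul_sub]
      congr 1
      have hQp : 0 < Q v y z := lt_of_le_of_ne (hQ v y z) (Ne.symm h)
      have h1 : 0 < ∑ z', Q v y z' := lt_of_lt_of_le hQp (Finset.single_le_sum
        (fun z' _ => hQ v y z') (Finset.mem_univ z))
      have h2 : 0 < ∑ y', Q v y' z := lt_of_lt_of_le hQp (Finset.single_le_sum
        (fun y' _ => hQ v y' z) (Finset.mem_univ y))
      have h3 : 0 < ∑ v', Q v' y z := lt_of_lt_of_le hQp (Finset.single_le_sum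
        (fun v' _ => hQ v' y z) (Finset.mem_univ v))
      have h4 : 0 < ∑ y', ∑ z', Q v y' z' := lt_of_lt_of_le h1 (Finset.single_le_sum
        (fun y' _ => Finset.sum_nonneg fun z' _ => hQ v y' z') (Finset.mem_univ y))
      have h5 : 0 < ∑ v', ∑ z', Q v' y z' := lt_of_lt_of_le h1 (Finset.single_le_sum
        (fun v' _ => Finset.sum_nonneg fun z' _ => hQ v' y z') (Finset.mem_univ v))
      have h6 : 0 < ∑ v', ∑ y', Q v' y' z := lt_of_lt_of_le h2 (Finset.single_le_sum
        (fun v' _ => Finset.sum_nonneg fun y' _ => hQ v' y' z) (Finset.mem_univ v))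
      have hswap : (∑ z', ∑ y', Q v y' z') = ∑ y', ∑ z', Q v y' z' := Finset.sum_comm
      rw [hswap]
      rw [← Real.logb_div (by positivity) (by positivity)]
      congr 1
      have hmc' := hmc v y z
      field_simp
      linear_combination (-1 : ℝ) * hmc'
  rw [Finset.sum_congr rfl fun v _ => Finset.sum_congr rfl fun y _ =>
    Finset.sum_congr rfl fun z _ => hstep v y z]
  have hbtot : (∑ v, ∑ y, ∑ z,
      ((∑ v', Q v' y z) * (∑ y', Q v y' z) / (∑ v', ∑ y', Q v' y' z))) = 1 := by
    have eA : (∑ v, ∑ y, ∑ z,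
        ((∑ v', Q v' y z) * (∑ y', Q v y' z) / (∑ v', ∑ y', Q v' y' z)))
        = ∑ z, ∑ v, ∑ y,
        ((∑ v', Q v' y z) * (∑ y', Q v y' z) / (∑ v', ∑ y', Q v' y' z)) :=
      (Finset.sum_congr rfl fun v _ => Finset.sum_comm).trans Finset.sum_comm
    rw [eA]
    have eB : ∀ z, (∑ v, ∑ y,
        ((∑ v', Q v' y z) * (∑ y', Q v y' z) / (∑ v', ∑ y', Q v' y' z)))
        = ∑ v', ∑ y', Q v' y' z := by
      intro z
      have e1 : ∀ v : V, (∑ y,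
          ((∑ v', Q v' y z) * (∑ y', Q v y' z) / (∑ v', ∑ y', Q v' y' z)))
          = (∑ y, ∑ v', Q v' y z) * ((∑ y', Q v y' z) / (∑ v', ∑ y', Q v' y' z)) := by
        intro v
        simp only [mul_div_assoc]
        rw [← Finset.sum_mul]
      rw [Finset.sum_congr rfl fun v _ => e1 v, ← Finset.mul_sum, ← Finset.sum_div]
      have e2 : (∑ y, ∑ v', Q v' y z) = ∑ v', ∑ y', Q v' y' z := Finset.sum_comm
      rw [e2]
      rcases eq_or_ne (∑ v', ∑ y', Q v' y' z) 0 with h | h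
      · rw [h]; simp
      · rw [div_self h, mul_one]
    rw [Finset.sum_congr rfl fun z _ => eB z]
    calc (∑ z, ∑ v', ∑ y', Q v' y' z) = ∑ v, ∑ y, ∑ z, Q v y z :=
          Finset.sum_comm.trans (Finset.sum_congr rfl fun v _ => Finset.sum_comm)
      _ = 1 := hs
  refine gibbs_sum3 Q
    (fun v y z => (∑ v', Q v' y z) * (∑ y', Q v y' z) / (∑ v', ∑ y', Q v' y' z))
    hQ ?_ ?_ ?_
  · intro v y z
    exact div_nonneg (mul_nonneg (Finset.sum_nonneg fun _ _ => hQ _ _ _)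
      (Finset.sum_nonneg fun _ _ => hQ _ _ _))
      (Finset.sum_nonneg fun _ _ => Finset.sum_nonneg fun _ _ => hQ _ _ _)
  · intro v y z h
    have hQp : 0 < Q v y z := lt_of_le_of_ne (hQ v y z) (Ne.symm h)
    have h2 : 0 < ∑ y', Q v y' z := lt_of_lt_of_le hQp (Finset.single_le_sum
      (fun y' _ => hQ v y' z) (Finset.mem_univ y))
    have h3 : 0 < ∑ v', Q v' y z := lt_of_lt_of_le hQp (Finset.single_le_sum
      (fun v' _ => hQ v' y z) (Finset.mem_univ v))
    have h6 : 0 < ∑ v', ∑ y', Q v' y' z := lt_of_lt_of_le h2 (Finset.single_le_sum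
      (fun v' _ => Finset.sum_nonneg fun y' _ => hQ v' y' z) (Finset.mem_univ v))
    positivity
  · rw [hbtot, hs]

/-- target data processing inequality, if `X - Y - Z` is a Markov
chain then `S^𝛂(X → Y) ≥ S^𝛂(X → Z)`. -/
theorem syn_target_dpi
    {n : ℕ} {𝓧 : Fin n → Type*} [∀ i, Fintype (𝓧 i)]
    {Yt Zt : Type*} [Fintype Yt] [Fintype Zt]
    (P : (∀ i, 𝓧 i) → Yt → Zt → ℝ)
    (hpos : ∀ x y z, 0 ≤ P x y z)
    (hsum : ∑ x, ∑ y, ∑ z, P x y z = 1)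
    (hmc : MarkovChain P)
    (A : Finset (Finset (Fin n))) :
    Syn (fun x z => ∑ y, P x y z) A ≤ Syn (fun x y => ∑ z, P x y z) A := by
  classical
  have hYpos : ∀ x y, (0:ℝ) ≤ ∑ z, P x y z := fun x y =>
    Finset.sum_nonneg fun z _ => hpos x y z
  have hYtot : ∑ x, ∑ y, ∑ z, P x y z = 1 := hsum
  -- boundedness of the Y-side synergy set
  have hbdd : BddAbove (synSet (fun x y => ∑ z, P x y z) A) := by
    refine ⟨(Fintype.card Yt : ℝ) / Real.log 2, fun r hr => ?_⟩
    obtain ⟨k, c, hc, hind, rfl⟩ := hr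
    apply MI_le
    · intro v y
      exact Finset.sum_nonneg fun x _ => mul_nonneg (hc.1 x v) (hYpos x y)
    · -- total mass one
      have e1 : (∑ v : Fin k, ∑ y, ∑ x, c x v * ∑ z, P x y z)
          = ∑ x, ∑ v : Fin k, ∑ y, c x v * ∑ z, P x y z :=
        (Finset.sum_congr rfl fun v _ => Finset.sum_comm).trans Finset.sum_comm
      rw [e1]
      have e2 : ∀ x, (∑ v : Fin k, ∑ y, c x v * ∑ z, P x y z)
          = ∑ y, ∑ z, P x y z := by
        intro x
        have : ∀ v : Fin k, (∑ y, c x v * ∑ z, P x y z)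
            = c x v * ∑ y, ∑ z, P x y z := fun v => (Finset.mul_sum _ _ _).symm
        rw [Finset.sum_congr rfl fun v _ => this v, ← Finset.sum_mul, hc.2 x, one_mul]
      rw [Finset.sum_congr rfl fun x _ => e2 x, hYtot]
  -- 0 is attained on the Y side
  have h0mem : (0:ℝ) ∈ synSet (fun x y => ∑ z, P x y z) A := by
    refine ⟨1, fun _ _ => 1, ⟨fun _ _ => zero_le_one, fun _ => by simp⟩, ?_, ?_⟩
    · intro α hα v t
      simp only [one_mul]
      have h1 : (∑ x, ∑ y, ∑ z, P x y z) = 1 := hYtot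
      rw [h1, one_mul]
      rw [show (∑ v' : Fin 1, ∑ x, if restr α x = t then ∑ y, ∑ z, P x y z else 0)
        = ∑ x, if restr α x = t then ∑ y, ∑ z, P x y z else 0 from Fin.sum_univ_one _]
    · unfold MI
      rw [eq_comm]
      apply Finset.sum_eq_zero; intro v _
      apply Finset.sum_eq_zero; intro y _
      simp only [one_mul]
      split_ifs with h
      · rfl
      · have hg1 : (∑ y', ∑ x, ∑ z, P x y' z) = 1 := Finset.sum_comm.trans hYtot
        rw [show (∑ a' : Fin 1, ∑ x, ∑ z, P x y z) = ∑ x, ∑ z, P x y z from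
          Fin.sum_univ_one _, hg1, one_mul, div_self h, Real.logb_one, mul_zero]
  apply Real.sSup_le ?_ (le_csSup hbdd h0mem)
  intro r hr
  obtain ⟨k, c, hc, hind, rfl⟩ := hr
  have feas2 : ∀ α ∈ A, IndepWithFun
      (fun (v : Fin k) x => c x v * (∑ y, ∑ z, P x y z)) (restr (𝓧 := 𝓧) α) := by
    intro α hα
    have efun : (fun (v : Fin k) x => c x v * (∑ z, ∑ y, P x y z))
        = fun (v : Fin k) x => c x v * (∑ y, ∑ z, P x y z) := by
      funext v x
      rw [Finset.sum_comm]
    exact efun ▸ hind α hα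
  have hmem : MI (fun (v : Fin k) y => ∑ x, c x v * (∑ z, P x y z))
      ∈ synSet (fun x y => ∑ z, P x y z) A := ⟨k, c, hc, feas2, rfl⟩
  have hQpos : ∀ (v : Fin k) y z, (0:ℝ) ≤ ∑ x, c x v * P x y z := fun v y z =>
    Finset.sum_nonneg fun x _ => mul_nonneg (hc.1 x v) (hpos x y z)
  have hQtot : ∑ v : Fin k, ∑ y, ∑ z, ∑ x, c x v * P x y z = 1 := by
    have e1 : (∑ v : Fin k, ∑ y, ∑ z, ∑ x, c x v * P x y z)
        = ∑ x, ∑ v : Fin k, ∑ y, ∑ z, c x v * P x y z :=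
      ((Finset.sum_congr rfl fun v _ =>
        (Finset.sum_congr rfl fun y _ => Finset.sum_comm).trans
          Finset.sum_comm).trans Finset.sum_comm)
    rw [e1]
    have e2 : ∀ x, (∑ v : Fin k, ∑ y, ∑ z, c x v * P x y z)
        = ∑ y, ∑ z, P x y z := by
      intro x
      have : ∀ v : Fin k, (∑ y, ∑ z, c x v * P x y z)
          = c x v * ∑ y, ∑ z, P x y z := by
        intro v
        rw [Finset.mul_sum]
        exact Finset.sum_congr rfl fun y _ => (Finset.mul_sum _ _ _).symm
      rw [Finset.sum_congr rfl fun v _ => this v, ← Finset.sum_mul, hc.2 x, one_mul]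
    rw [Finset.sum_congr rfl fun x _ => e2 x, hsum]
  have hQmc : ∀ (v : Fin k) y z,
      (∑ x, c x v * P x y z) * (∑ v' : Fin k, ∑ z', ∑ x, c x v' * P x y z') =
      (∑ z', ∑ x, c x v * P x y z') * (∑ v' : Fin k, ∑ x, c x v' * P x y z) := by
    intro v y z
    have eA : (∑ v' : Fin k, ∑ z', ∑ x, c x v' * P x y z')
        = ∑ x, ∑ z', P x y z' := by
      calc (∑ v' : Fin k, ∑ z', ∑ x, c x v' * P x y z')
          = ∑ x, ∑ v' : Fin k, ∑ z', c x v' * P x y z' :=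
            (Finset.sum_congr rfl fun v' _ => Finset.sum_comm).trans Finset.sum_comm
        _ = ∑ x, ∑ z', P x y z' := by
            refine Finset.sum_congr rfl fun x _ => ?_
            rw [Finset.sum_congr rfl fun v' (_ : v' ∈ Finset.univ) =>
              (Finset.mul_sum _ _ _).symm, ← Finset.sum_mul, hc.2 x, one_mul]
    have eB : (∑ z', ∑ x, c x v * P x y z')
        = ∑ x, c x v * (∑ z', P x y z') :=
      Finset.sum_comm.trans (Finset.sum_congr rfl fun x _ => (Finset.mul_sum _ _ _).symm)
    have eC : (∑ v' : Fin k, ∑ x, c x v' * P x y z) = ∑ x, P x y z := by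
      rw [Finset.sum_comm]
      refine Finset.sum_congr rfl fun x _ => ?_
      rw [← Finset.sum_mul, hc.2 x, one_mul]
    rw [eA, eB, eC, Finset.sum_mul, Finset.sum_mul]
    refine Finset.sum_congr rfl fun x _ => ?_
    have hx := hmc x y z
    linear_combination (c x v) * hx
  have hdpi := MI_dpi (fun v y z => ∑ x, c x v * P x y z) hQpos hQtot hQmc
  have eZ : (fun (v : Fin k) z => ∑ x, c x v * ∑ y, P x y z)
      = fun (v : Fin k) z => ∑ y, ∑ x, c x v * P x y z := by
    funext v z
    rw [Finset.sum_congr rfl fun x (_ : x ∈ Finset.univ) => Finset.mul_sum _ _ _]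
    exact Finset.sum_comm
  have eY : (fun (v : Fin k) y => ∑ x, c x v * ∑ z, P x y z)
      = fun (v : Fin k) y => ∑ z, ∑ x, c x v * P x y z := by
    funext v y
    rw [Finset.sum_congr rfl fun x (_ : x ∈ Finset.univ) => Finset.mul_sum _ _ _]
    exact Finset.sum_comm
  calc MI (fun (v : Fin k) z => ∑ x, c x v * ∑ y, P x y z)
      = MI (fun (v : Fin k) z => ∑ y, ∑ x, c x v * P x y z) := by rw [eZ]
    _ ≤ MI (fun (v : Fin k) y => ∑ z, ∑ x, c x v * P x y z) := hdpi
    _ = MI (fun (v : Fin k) y => ∑ x, c x v * ∑ z, P x y z) := by rw [eY]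
    _ ≤ Syn (fun x y => ∑ z, P x y z) A := le_csSup hbdd hmem
end

section
/- Self-synergy bound: S^𝛂(X → X) ≤ H(X) − max_{α_j ∈ 𝛂} H(X^{α_j}). -/
open Finset
open scoped BigOperators Classical

lemma sum_neg_mul_const {ι : Type*} (s : Finset ι) (g : ι → ℝ) (L : ℝ) :
    ∑ i ∈ s, -(g i * L) = -((∑ i ∈ s, g i) * L) := by
  rw [Finset.sum_mul, ← Finset.sum_neg_distrib]

lemma core_mi_bound {V X T : Type*} [Fintype V] [Fintype X] [Fintype T]
    (q : V → X → ℝ) (hq : ∀ v x, 0 ≤ q v x) (pX : X → ℝ)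
    (hmarg : ∀ x, ∑ v, q v x = pX x) (f : X → T)
    (hind : ∀ v t, (∑ x, if f x = t then q v x else 0) =
      (∑ x, q v x) * (∑ v', ∑ x, if f x = t then q v' x else 0)) :
    MI q ≤ H pX - H (fun t => ∑ x, if f x = t then pX x else 0) := by
  classical
  have hpX0 : ∀ x, 0 ≤ pX x := fun x => (hmarg x) ▸ Finset.sum_nonneg fun v _ => hq v x
  have hqle : ∀ v x, q v x ≤ pX x := by
    intro v x
    rw [← hmarg x]
    exact Finset.single_le_sum (fun v _ => hq v x) (Finset.mem_univ v)
  have hpTsum : ∀ t, (∑ v', ∑ x, if f x = t then q v' x else 0)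
      = ∑ x, if f x = t then pX x else 0 := by
    intro t
    rw [Finset.sum_comm]
    refine Finset.sum_congr rfl fun x _ => ?_
    split
    · exact hmarg x
    · simp
  have hqm : ∀ v x, q v x ≤ ∑ x', if f x' = f x then q v x' else 0 := by
    intro v x
    have h := Finset.single_le_sum (f := fun x' => if f x' = f x then q v x' else 0)
      (fun i _ => by split; exacts [hq v i, le_rfl]) (Finset.mem_univ x)
    simpa using h
  have hHX : ∑ v, ∑ x, -(q v x * Real.logb 2 (pX x)) = H pX := by
    rw [Finset.sum_comm, H]
    refine Finset.sum_congr rfl fun x _ => ?_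
    rw [sum_neg_mul_const, hmarg x]
    split
    · simp [*]
    · rfl
  have hHT : ∑ v, ∑ x, -(q v x * Real.logb 2 (∑ x', if f x' = f x then pX x' else 0))
      = H (fun t => ∑ x, if f x = t then pX x else 0) := by
    rw [Finset.sum_comm]
    calc ∑ x, ∑ v, -(q v x * Real.logb 2 (∑ x', if f x' = f x then pX x' else 0))
        = ∑ x, -(pX x * Real.logb 2 (∑ x', if f x' = f x then pX x' else 0)) := by
          refine Finset.sum_congr rfl fun x _ => ?_
          rw [sum_neg_mul_const, hmarg x]
      _ = ∑ x, ∑ t, (if f x = t then -(pX x * Real.logb 2 (∑ x', if f x' = t then pX x' else 0)) else 0) := by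
          refine Finset.sum_congr rfl fun x _ => ?_
          rw [Finset.sum_ite_eq univ (f x)
            (fun t => -(pX x * Real.logb 2 (∑ x', if f x' = t then pX x' else 0)))]
          simp
      _ = ∑ t, ∑ x, (if f x = t then -(pX x * Real.logb 2 (∑ x', if f x' = t then pX x' else 0)) else 0) :=
          Finset.sum_comm
      _ = H (fun t => ∑ x, if f x = t then pX x else 0) := by
          rw [H]
          refine Finset.sum_congr rfl fun t _ => ?_
          have h2 : ∑ x, (if f x = t then -(pX x * Real.logb 2 (∑ x', if f x' = t then pX x' else 0)) else 0)
              = -((∑ x, if f x = t then pX x else 0) * Real.logb 2 (∑ x', if f x' = t then pX x' else 0)) := by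
            rw [← sum_neg_mul_const]
            refine Finset.sum_congr rfl fun x _ => ?_
            split <;> simp
          rw [h2]
          split
          · simp [*]
          · rfl
  have hMI : MI q = ∑ v, ∑ x, (if q v x = 0 then 0 else
      q v x * Real.logb 2 (q v x / ((∑ x', q v x') * pX x))) := by
    rw [MI]
    refine Finset.sum_congr rfl fun v _ => Finset.sum_congr rfl fun x _ => ?_
    rw [hmarg x]
  have key : MI q + H (fun t => ∑ x, if f x = t then pX x else 0) - H pX
      = ∑ v, ∑ x, (if q v x = 0 then 0 else
          q v x * Real.logb 2 (q v x / (∑ x', if f x' = f x then q v x' else 0))) := by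
    rw [hMI, ← hHT, ← hHX]
    rw [← Finset.sum_add_distrib, ← Finset.sum_sub_distrib]
    refine Finset.sum_congr rfl fun v _ => ?_
    rw [← Finset.sum_add_distrib, ← Finset.sum_sub_distrib]
    refine Finset.sum_congr rfl fun x _ => ?_
    by_cases h : q v x = 0
    · simp [h]
    · rw [if_neg h, if_neg h]
      have hq' : 0 < q v x := lt_of_le_of_ne (hq v x) (Ne.symm h)
      have hpx : 0 < pX x := lt_of_lt_of_le hq' (hqle v x)
      have hqV : 0 < ∑ x', q v x' :=
        lt_of_lt_of_le hq' (Finset.single_le_sum (fun i _ => hq v i) (Finset.mem_univ x))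
      have hpt : 0 < ∑ x', if f x' = f x then pX x' else 0 := by
        refine lt_of_lt_of_le hpx ?_
        have := Finset.single_le_sum (f := fun x' => if f x' = f x then pX x' else 0)
          (fun i _ => by split; exacts [hpX0 i, le_rfl]) (Finset.mem_univ x)
        simpa using this
      have hmeq : (∑ x', if f x' = f x then q v x' else 0)
          = (∑ x', q v x') * (∑ x', if f x' = f x then pX x' else 0) := by
        rw [hind v (f x), hpTsum (f x)]
      rw [hmeq]
      rw [Real.logb_div h (by positivity), Real.logb_mul (ne_of_gt hqV) (ne_of_gt hpx),
        Real.logb_div h (by positivity), Real.logb_mul (ne_of_gt hqV) (ne_of_gt hpt)]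
      ring
  have hle : ∑ v, ∑ x, (if q v x = 0 then 0 else
      q v x * Real.logb 2 (q v x / (∑ x', if f x' = f x then q v x' else 0))) ≤ 0 := by
    refine Finset.sum_nonpos fun v _ => Finset.sum_nonpos fun x _ => ?_
    by_cases h : q v x = 0
    · simp [h]
    · rw [if_neg h]
      have hq' : 0 < q v x := lt_of_le_of_ne (hq v x) (Ne.symm h)
      have hm : q v x ≤ ∑ x', if f x' = f x then q v x' else 0 := hqm v x
      have hm0 : 0 < ∑ x', if f x' = f x then q v x' else 0 := lt_of_lt_of_le hq' hm
      have hlog : Real.logb 2 (q v x / (∑ x', if f x' = f x then q v x' else 0)) ≤ 0 :=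
        Real.logb_nonpos one_lt_two (by positivity) ((div_le_one hm0).mpr hm)
      exact mul_nonpos_of_nonneg_of_nonpos hq'.le hlog
  linarith [key ▸ hle]

set_option maxHeartbeats 1000000 in
/-- self-synergy bound `S^𝛂(X → X) ≤ H(X) − max_{α ∈ 𝛂} H(X^α)`. -/
theorem self_syn_upper_bound
    {n : ℕ} {𝓧 : Fin n → Type*} [∀ i, Fintype (𝓧 i)]
    (pX : (∀ i, 𝓧 i) → ℝ) (hpX : IsDist pX)
    (A : Finset (Finset (Fin n))) (hA : A.Nonempty) :
    Syn (selfJoint pX) A ≤ H pX - A.sup' hA (fun α =>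
      H (fun (a : ∀ i : ↥α, 𝓧 i.1) => ∑ x, if restr α x = a then pX x else 0)) := by
  classical
  have hsum_self : ∀ x : (∀ i, 𝓧 i), (∑ y, selfJoint pX x y) = pX x := by
    intro x
    simp only [selfJoint]
    have h := Finset.sum_ite_eq' (Finset.univ : Finset (∀ i, 𝓧 i)) x (fun _ => pX x)
    simp only [Finset.mem_univ, if_true] at h
    convert h using 2 with y hy
    by_cases hxy : y = x <;> simp [hxy]
  apply csSup_le
  · refine ⟨_, 1, (fun _ _ => 1), ⟨fun _ _ => zero_le_one, fun a => by simp⟩, ?_, rfl⟩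
    intro α hα v t
    simp only [one_mul, hsum_self]
    rw [hpX.2, one_mul]
    simp
  · rintro r ⟨k, c, hc, hindep, rfl⟩
    rw [le_sub_comm]
    apply Finset.sup'_le
    intro α hα
    rw [le_sub_comm]
    have hfun : (fun (v : Fin k) (y : ∀ i, 𝓧 i) => ∑ x, c x v * selfJoint pX x y)
        = fun v y => c y v * pX y := by
      funext v y
      simp [selfJoint, mul_ite, mul_zero]
    rw [hfun]
    have hind := hindep α hα
    have hfun2 : (fun (v : Fin k) (x : ∀ i, 𝓧 i) => c x v * (∑ y, selfJoint pX x y))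
        = fun v x => c x v * pX x := by
      funext v x; rw [hsum_self]
    rw [hfun2] at hind
    have hb := core_mi_bound (fun v y => c y v * pX y)
      (fun v x => mul_nonneg (hc.1 x v) (hpX.1 x)) pX
      (fun x => by rw [← Finset.sum_mul, hc.2 x, one_mul]) (restr α) hind
    convert hb using 3
    rfl
    funext t
    exact Finset.sum_congr rfl fun x _ => by
      by_cases hrx : restr α x = t <;> simp [hrx]
end

section
/- Asymptotic dominance of synergy: let X = (X_1,...,X_n) with each |𝒳_k| ≤ K, and suppose lim_{n→∞} H(X)/n exists and is positive. Then for fixed m, lim_{n→∞} B^m(X)/H(X) = 1, where B^m(X) is the m-th backbone self-synergy. -/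
open Finset
open scoped BigOperators Classical

section Decomp
variable {X ι : Type*} [Fintype X] [Fintype ι]

/-- If `w` has negative entries, we can push `q` along `w` until a coordinate vanishes. -/
lemma push_step (q w : X → ℝ) (hq : ∀ x, 0 ≤ q x)
    (hsupp : ∀ x, q x = 0 → w x = 0) (hneg : ∃ x, w x < 0) :
    ∃ t : ℝ, 0 < t ∧ (∀ x, 0 ≤ q x + t * w x) ∧
      (∃ x₀, q x₀ ≠ 0 ∧ q x₀ + t * w x₀ = 0) ∧
      (∀ x, q x = 0 → q x + t * w x = 0) := by
  classical
  set N : Finset X := Finset.univ.filter (fun x => w x < 0) with hN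
  have hNne : N.Nonempty := by
    obtain ⟨x, hx⟩ := hneg
    exact ⟨x, by simp [hN, hx]⟩
  set t : ℝ := N.inf' hNne (fun x => q x / (-w x)) with ht
  have hmemq : ∀ x ∈ N, 0 < q x := by
    intro x hx
    have hwx : w x < 0 := by simpa [hN] using hx
    rcases lt_or_eq_of_le (hq x) with h | h
    · exact h
    · exact absurd (hsupp x h.symm) (ne_of_lt hwx)
  have htpos : 0 < t := by
    rw [ht]
    rw [Finset.lt_inf'_iff]
    intro x hx
    have hwx : w x < 0 := by simpa [hN] using hx
    exact div_pos (hmemq x hx) (by linarith)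
  obtain ⟨x₀, hx₀N, hx₀⟩ := Finset.exists_mem_eq_inf' hNne (fun x => q x / (-w x))
  have hwx₀ : w x₀ < 0 := by simpa [hN] using hx₀N
  refine ⟨t, htpos, ?_, ⟨x₀, (hmemq x₀ hx₀N).ne', ?_⟩, ?_⟩
  · intro x
    by_cases hwx : w x < 0
    · have hxN : x ∈ N := by simp [hN, hwx]
      have : t ≤ q x / (-w x) := by
        rw [ht]; exact Finset.inf'_le _ hxN
      have h2 : t * (-w x) ≤ q x / (-w x) * (-w x) :=
        mul_le_mul_of_nonneg_right this (by linarith)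
      rw [div_mul_cancel₀ _ (by linarith : (-w x) ≠ 0)] at h2
      nlinarith
    · push_neg at hwx
      have := hq x
      nlinarith
  · have : t = q x₀ / (-w x₀) := hx₀
    rw [this]
    have hw0 : w x₀ ≠ 0 := ne_of_lt hwx₀
    rw [div_neg, neg_mul, div_mul_cancel₀ _ hw0]
    ring
  · intro x hx
    rw [hx, hsupp x hx]; ring

/-- Main decomposition: every nonnegative point decomposes into points of the same
    affine fibre of `L` whose support has size at most `card ι`. -/
lemma decomp (L : ((X → ℝ)) →ₗ[ℝ] (ι → ℝ)) (i0 : ι) (hL : ∀ q : X → ℝ, L q i0 = ∑ x, q x) :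
    ∀ s : Finset X, ∀ q : X → ℝ, (∀ x, 0 ≤ q x) → (∀ x, q x ≠ 0 → x ∈ s) →
    ∃ (k : ℕ) (lam : Fin k → ℝ) (Q : Fin k → X → ℝ),
      (∀ i, 0 ≤ lam i) ∧ (∑ i, lam i = 1) ∧
      (∀ i x, 0 ≤ Q i x) ∧ (∀ i, L (Q i) = L q) ∧
      (∀ i, (Finset.univ.filter (fun x => Q i x ≠ 0)).card ≤ Fintype.card ι) ∧
      (∀ x, q x = ∑ i, lam i * Q i x) := by
  classical
  intro s
  induction s using Finset.strongInduction with
  | _ s IH =>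
    intro q hq hs
    set T : Finset X := Finset.univ.filter (fun x => q x ≠ 0) with hT
    by_cases hind : LinearIndependent ℝ (fun x : {x // x ∈ T} => L (Pi.single (x : X) (1:ℝ)))
    · -- support is small: q itself works
      refine ⟨1, fun _ => 1, fun _ => q, by intro i; norm_num, by simp, fun _ => hq, fun _ => rfl,
        ?_, by intro x; simp⟩
      intro _
      have := hind.fintype_card_le_finrank
      rwa [Module.finrank_fintype_fun_eq_card, Fintype.card_coe] at this
    · -- get a dependency vector w
      obtain ⟨g, hgsum, j, hgj⟩ := Fintype.not_linearIndependent_iff.1 hind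
      set w : X → ℝ := ∑ x ∈ T.attach, g x • (Pi.single (x : X) (1:ℝ) : X → ℝ) with hw
      have hweval : ∀ y : X, w y = if h : y ∈ T then g ⟨y, h⟩ else 0 := by
        intro y
        rw [hw]
        rw [Finset.sum_apply]
        by_cases hy : y ∈ T
        · rw [Finset.sum_eq_single (⟨y, hy⟩ : {x // x ∈ T})]
          · simp [hy]
          · intro b _ hb
            have : (b : X) ≠ y := by
              intro h; apply hb; ext; exact h
            simp [Pi.single_apply, this.symm]
          · simp
        · rw [dif_neg hy]
          apply Finset.sum_eq_zero
          intro b _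
          have : (b : X) ≠ y := fun h => hy (h ▸ b.2)
          simp [Pi.single_apply, this.symm]
      have hwsupp : ∀ x, q x = 0 → w x = 0 := by
        intro x hx
        rw [hweval]
        rw [dif_neg]
        simp [hT, hx]
      have hLw : L w = 0 := by
        rw [hw]
        rw [map_sum]
        simpa using hgsum
      have hwsum : ∑ x, w x = 0 := by rw [← hL, hLw]; rfl
      have hwj : w j ≠ 0 := by rw [hweval, dif_pos j.2]; simpa using hgj
      -- w has both a negative and a positive entry
      have hneg : ∃ x, w x < 0 := by
        by_contra hcon
        push_neg at hcon
        have hall : ∀ x ∈ Finset.univ, (0:ℝ) ≤ w x := fun x _ => hcon x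
        have := (Finset.sum_eq_zero_iff_of_nonneg hall).1 hwsum
        exact hwj (this j (Finset.mem_univ _))
      have hpos : ∃ x, 0 < w x := by
        by_contra hcon
        push_neg at hcon
        have hall : ∀ x ∈ Finset.univ, (0:ℝ) ≤ -w x := fun x _ => by
          simpa using hcon x
        have hsum' : ∑ x, -w x = 0 := by simp [hwsum]
        have := (Finset.sum_eq_zero_iff_of_nonneg hall).1 hsum'
        have := this j (Finset.mem_univ _)
        apply hwj; linarith
      -- push in both directions
      obtain ⟨a, hapos, ha0, ⟨xa, hxaq, hxa⟩, hasupp⟩ := push_step q w hq hwsupp hneg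
      obtain ⟨b, hbpos, hb0, ⟨xb, hxbq, hxb⟩, hbsupp⟩ := push_step q (-w) hq
        (fun x hx => by simp [hwsupp x hx]) (by obtain ⟨x, hx⟩ := hpos; exact ⟨x, by simpa using hx⟩)
      set q1 : X → ℝ := fun x => q x + a * w x with hq1
      set q2 : X → ℝ := fun x => q x - b * w x with hq2
      have hq2' : ∀ x, q2 x = q x + b * (-w) x := fun x => by
        simp only [hq2, Pi.neg_apply]; ring
      have hq20 : ∀ x, 0 ≤ q2 x := fun x => by rw [hq2' x]; exact hb0 x
      have hxas : xa ∈ s := hs xa hxaq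
      have hxbs : xb ∈ s := hs xb hxbq
      have hsub1 : ∀ x, q1 x ≠ 0 → x ∈ s.erase xa := by
        intro x hx
        rw [Finset.mem_erase]
        refine ⟨?_, ?_⟩
        · intro h; rw [h] at hx; exact hx hxa
        · by_contra hxs
          have hq0 : q x = 0 := by by_contra hq0; exact hxs (hs x hq0)
          exact hx (hasupp x hq0)
      have hsub2 : ∀ x, q2 x ≠ 0 → x ∈ s.erase xb := by
        intro x hx
        rw [Finset.mem_erase]
        refine ⟨?_, ?_⟩
        · intro h; rw [h] at hx; apply hx; rw [hq2' xb]; exact hxb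
        · by_contra hxs
          have hq0 : q x = 0 := by by_contra hq0; exact hxs (hs x hq0)
          apply hx; rw [hq2' x]; exact hbsupp x hq0
      obtain ⟨k1, lam1, Q1, h1a, h1b, h1c, h1d, h1e, h1f⟩ :=
        IH (s.erase xa) (Finset.erase_ssubset hxas) q1 ha0 hsub1
      obtain ⟨k2, lam2, Q2, h2a, h2b, h2c, h2d, h2e, h2f⟩ :=
        IH (s.erase xb) (Finset.erase_ssubset hxbs) q2 hq20 hsub2
      have hab : (0:ℝ) < a + b := by linarith
      have hLq1 : L q1 = L q := by
        have hfe : q1 = q + a • w := by funext x; simp [hq1]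
        rw [hfe, map_add, map_smul, hLw]; simp
      have hLq2 : L q2 = L q := by
        have hfe : q2 = q + (-b) • w := by funext x; simp [hq2]; ring
        rw [hfe, map_add, map_smul, hLw]; simp
      refine ⟨k1 + k2,
        Fin.append (fun i => (b/(a+b)) * lam1 i) (fun i => (a/(a+b)) * lam2 i),
        Fin.append Q1 Q2, ?_, ?_, ?_, ?_, ?_, ?_⟩
      · intro i
        refine Fin.addCases ?_ ?_ i
        · intro j
          rw [Fin.append_left]
          exact mul_nonneg (div_nonneg hbpos.le hab.le) (h1a j)
        · intro j
          rw [Fin.append_right]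
          exact mul_nonneg (div_nonneg hapos.le hab.le) (h2a j)
      · rw [Fin.sum_univ_add]
        simp only [Fin.append_left, Fin.append_right, ← Finset.mul_sum, h1b, h2b]
        field_simp
        ring
      · intro i
        refine Fin.addCases ?_ ?_ i
        · intro j; rw [Fin.append_left]; exact h1c j
        · intro j; rw [Fin.append_right]; exact h2c j
      · intro i
        refine Fin.addCases ?_ ?_ i
        · intro j; rw [Fin.append_left, h1d j, hLq1]
        · intro j; rw [Fin.append_right, h2d j, hLq2]
      · intro i
        refine Fin.addCases ?_ ?_ i
        · intro j; rw [Fin.append_left]; exact h1e j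
        · intro j; rw [Fin.append_right]; exact h2e j
      · intro x
        rw [Fin.sum_univ_add]
        simp only [Fin.append_left, Fin.append_right, mul_assoc]
        rw [← Finset.mul_sum, ← Finset.mul_sum, ← h1f x, ← h2f x]
        have e1 : q1 x = q x + a * w x := rfl
        have e2 : q2 x = q x - b * w x := rfl
        rw [e1, e2]
        field_simp
        ring

end Decomp

lemma H_eq {A : Type*} [Fintype A] (p : A → ℝ) :
    H p = ∑ a, -(p a * Real.logb 2 (p a)) := by
  unfold H
  apply Finset.sum_congr rfl
  intro a _
  split
  · next h => rw [h]; ring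
  · rfl

lemma H_eq_support {A : Type*} [Fintype A] (p : A → ℝ) :
    H p = ∑ a ∈ Finset.univ.filter (fun a => p a ≠ 0), -(p a * Real.logb 2 (p a)) := by
  rw [H_eq]
  symm
  apply Finset.sum_filter_of_ne
  intro a _ h
  by_contra hpa
  rw [hpa] at h
  simp at h

lemma entropy_le_logb_card_support {A : Type*} [Fintype A] (p : A → ℝ)
    (h0 : ∀ a, 0 ≤ p a) (h1 : ∑ a, p a = 1) :
    H p ≤ Real.logb 2 ((Finset.univ.filter (fun a => p a ≠ 0)).card) := by
  classical
  set T : Finset A := Finset.univ.filter (fun a => p a ≠ 0) with hT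
  have hTs : ∑ a ∈ T, p a = 1 := by
    rw [hT, Finset.sum_filter_ne_zero]; exact h1
  have hTne : T.Nonempty := by
    rcases Finset.eq_empty_or_nonempty T with h | h
    · rw [h] at hTs; simp at hTs
    · exact h
  have hc : (0:ℝ) < (T.card : ℝ) := by
    have := Finset.card_pos.2 hTne
    exact_mod_cast this
  have hmem : ∀ a ∈ T, 0 < p a := by
    intro a ha
    have : p a ≠ 0 := by simpa [hT] using ha
    exact lt_of_le_of_ne (h0 a) (Ne.symm this)
  -- key pointwise bound in natural log
  have key : ∀ a ∈ T, -(p a * Real.log (p a)) - p a * Real.log (T.card : ℝ)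
      ≤ 1/(T.card : ℝ) - p a := by
    intro a ha
    have hpa := hmem a ha
    have h2 := Real.log_le_sub_one_of_pos (inv_pos.2 (mul_pos hpa hc))
    rw [Real.log_inv, Real.log_mul hpa.ne' hc.ne'] at h2
    have h3 := mul_le_mul_of_nonneg_left h2 hpa.le
    have h4 : p a * (p a * (T.card:ℝ))⁻¹ = 1/(T.card:ℝ) := by
      field_simp
    nlinarith [h3, h4]
  have hsum : ∑ a ∈ T, (-(p a * Real.log (p a)) - p a * Real.log (T.card : ℝ))
      ≤ ∑ a ∈ T, (1/(T.card : ℝ) - p a) := Finset.sum_le_sum key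
  rw [Finset.sum_sub_distrib, Finset.sum_sub_distrib, ← Finset.sum_mul, hTs] at hsum
  have hcard : ∑ _a ∈ T, 1/(T.card : ℝ) = 1 := by
    rw [Finset.sum_const, nsmul_eq_mul]
    field_simp
  rw [hcard] at hsum
  -- hsum : ∑ -(p a log p a) - log |T| ≤ 1 - 1 = 0
  have hln : ∑ a ∈ T, -(p a * Real.log (p a)) ≤ Real.log (T.card : ℝ) := by linarith
  rw [H_eq_support, ← hT]
  have hlog2 : (0:ℝ) < Real.log 2 := Real.log_pos (by norm_num)
  have : ∑ a ∈ T, -(p a * Real.logb 2 (p a)) =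
      (∑ a ∈ T, -(p a * Real.log (p a))) / Real.log 2 := by
    rw [Finset.sum_div]
    apply Finset.sum_congr rfl
    intro a _
    rw [Real.logb]
    ring
  rw [this, Real.logb]
  exact div_le_div_of_nonneg_right hln hlog2.le

lemma MI_le_H {V A : Type*} [Fintype V] [Fintype A] (r : V → A → ℝ)
    (h0 : ∀ v a, 0 ≤ r v a) :
    MI r ≤ H (fun a => ∑ v, r v a) := by
  classical
  have key : ∀ v a,
      (if r v a = 0 then 0 else
        r v a * Real.logb 2 (r v a / ((∑ a', r v a') * (∑ v', r v' a))))
      ≤ -(r v a * Real.logb 2 (∑ v', r v' a)) := by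
    intro v a
    by_cases h : r v a = 0
    · rw [if_pos h, h]; simp
    · rw [if_neg h]
      have hr : 0 < r v a := lt_of_le_of_ne (h0 v a) (Ne.symm h)
      have hmu : r v a ≤ ∑ a', r v a' :=
        Finset.single_le_sum (fun a' _ => h0 v a') (Finset.mem_univ a)
      have hpa : r v a ≤ ∑ v', r v' a :=
        Finset.single_le_sum (fun v' _ => h0 v' a) (Finset.mem_univ v)
      have hmupos : 0 < ∑ a', r v a' := lt_of_lt_of_le hr hmu
      have hpapos : 0 < ∑ v', r v' a := lt_of_lt_of_le hr hpa
      have harg : r v a / ((∑ a', r v a') * (∑ v', r v' a)) ≤ (∑ v', r v' a)⁻¹ := by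
        rw [← div_div]
        have h1 : r v a / (∑ a', r v a') ≤ 1 := by
          rw [div_le_one hmupos]; exact hmu
        calc r v a / (∑ a', r v a') / (∑ v', r v' a)
            ≤ 1 / (∑ v', r v' a) := by
              apply div_le_div_of_nonneg_right h1 hpapos.le
          _ = (∑ v', r v' a)⁻¹ := one_div _
      have hargpos : 0 < r v a / ((∑ a', r v a') * (∑ v', r v' a)) :=
        div_pos hr (mul_pos hmupos hpapos)
      have hlog := Real.logb_le_logb_of_le (by norm_num : (1:ℝ) < 2) hargpos harg
      rw [Real.logb_inv] at hlog
      have := mul_le_mul_of_nonneg_left hlog hr.le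
      linarith
  calc MI r ≤ ∑ v, ∑ a, -(r v a * Real.logb 2 (∑ v', r v' a)) := by
        apply Finset.sum_le_sum
        intro v _
        exact Finset.sum_le_sum (fun a _ => key v a)
    _ = H (fun a => ∑ v, r v a) := by
        rw [Finset.sum_comm, H_eq]
        apply Finset.sum_congr rfl
        intro a _
        simp only [← neg_mul]
        rw [← Finset.sum_mul]
        simp


lemma MI_mix_ge {k : ℕ} {A : Type*} [Fintype A] (lam : Fin k → ℝ) (Q : Fin k → A → ℝ)
    (p : A → ℝ)
    (hl0 : ∀ i, 0 ≤ lam i) (hl1 : ∑ i, lam i = 1)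
    (hQ0 : ∀ i a, 0 ≤ Q i a) (hQ1 : ∀ i, ∑ a, Q i a = 1)
    (hmix : ∀ a, p a = ∑ i, lam i * Q i a)
    (N : ℕ) (hN : 1 ≤ N)
    (hcard : ∀ i, ((Finset.univ.filter (fun a => Q i a ≠ 0)).card ≤ N)) :
    H p - Real.logb 2 N ≤ MI (fun i a => lam i * Q i a) := by
  classical
  have termEq : ∀ (i : Fin k) (a : A),
      (if lam i * Q i a = 0 then 0 else
        lam i * Q i a * Real.logb 2 ((lam i * Q i a) /
          ((∑ a', lam i * Q i a') * (∑ i', lam i' * Q i' a))))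
      = lam i * ((if Q i a = 0 then 0 else Q i a * Real.logb 2 (Q i a))
          - Q i a * Real.logb 2 (p a)) := by
    intro i a
    by_cases hli : lam i = 0
    · simp [hli]
    by_cases hQia : Q i a = 0
    · simp [hQia]
    have hlp : 0 < lam i := lt_of_le_of_ne (hl0 i) (Ne.symm hli)
    have hQp : 0 < Q i a := lt_of_le_of_ne (hQ0 i a) (Ne.symm hQia)
    have hmu : ∑ a', lam i * Q i a' = lam i := by
      rw [← Finset.mul_sum, hQ1 i, mul_one]
    have hpa : ∑ i', lam i' * Q i' a = p a := (hmix a).symm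
    have hppos : 0 < p a := by
      rw [hmix a]
      calc (0:ℝ) < lam i * Q i a := mul_pos hlp hQp
        _ ≤ ∑ i', lam i' * Q i' a :=
            Finset.single_le_sum (fun i' _ => mul_nonneg (hl0 i') (hQ0 i' a))
              (Finset.mem_univ i)
    rw [if_neg (by positivity : lam i * Q i a ≠ 0), if_neg hQia, hmu, hpa]
    rw [mul_div_mul_left _ _ hlp.ne']
    rw [Real.logb_div hQia hppos.ne']
    ring
  have hMI : MI (fun i a => lam i * Q i a)
      = (∑ i, lam i * (∑ a, (if Q i a = 0 then 0 else Q i a * Real.logb 2 (Q i a))))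
        - ∑ a, p a * Real.logb 2 (p a) := by
    unfold MI
    rw [Finset.sum_congr rfl (fun i _ => Finset.sum_congr rfl (fun a _ => termEq i a))]
    have step : ∀ i : Fin k,
        ∑ a, lam i * ((if Q i a = 0 then 0 else Q i a * Real.logb 2 (Q i a))
          - Q i a * Real.logb 2 (p a))
        = lam i * (∑ a, (if Q i a = 0 then 0 else Q i a * Real.logb 2 (Q i a)))
          - lam i * ∑ a, Q i a * Real.logb 2 (p a) := by
      intro i
      rw [← Finset.mul_sum, ← mul_sub, ← Finset.sum_sub_distrib]
    rw [Finset.sum_congr rfl (fun i _ => step i), Finset.sum_sub_distrib]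
    congr 1
    -- ∑ i, lam i * ∑ a, Q i a * logb (p a) = ∑ a, p a * logb (p a)
    calc ∑ i, lam i * ∑ a, Q i a * Real.logb 2 (p a)
        = ∑ i, ∑ a, lam i * Q i a * Real.logb 2 (p a) := by
          apply Finset.sum_congr rfl
          intro i _
          rw [Finset.mul_sum]
          apply Finset.sum_congr rfl
          intro a _
          ring
      _ = ∑ a, ∑ i, lam i * Q i a * Real.logb 2 (p a) := Finset.sum_comm
      _ = ∑ a, p a * Real.logb 2 (p a) := by
          apply Finset.sum_congr rfl
          intro a _
          rw [← Finset.sum_mul, ← hmix a]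
  have hHp : H p = -∑ a, p a * Real.logb 2 (p a) := by
    rw [H_eq]; simp
  -- lower bound for the first sum
  have hSA : ∀ i : Fin k,
      -Real.logb 2 N ≤ ∑ a, (if Q i a = 0 then 0 else Q i a * Real.logb 2 (Q i a)) := by
    intro i
    have hHQ : H (Q i) ≤ Real.logb 2 N := by
      have h1 := entropy_le_logb_card_support (Q i) (hQ0 i) (hQ1 i)
      have hcpos : 0 < ((Finset.univ.filter (fun a => Q i a ≠ 0)).card : ℝ) := by
        have hne : (Finset.univ.filter (fun a => Q i a ≠ 0)).Nonempty := by
          rcases Finset.eq_empty_or_nonempty (Finset.univ.filter (fun a => Q i a ≠ 0)) with h | h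
          · exfalso
            have : ∑ a, Q i a = ∑ a ∈ Finset.univ.filter (fun a => Q i a ≠ 0), Q i a := by
              rw [Finset.sum_filter_ne_zero]
            rw [h, Finset.sum_empty] at this
            rw [hQ1 i] at this
            norm_num at this
          · exact h
        exact_mod_cast Finset.card_pos.2 hne
      calc H (Q i) ≤ Real.logb 2 ((Finset.univ.filter (fun a => Q i a ≠ 0)).card) := h1
        _ ≤ Real.logb 2 N := by
            apply Real.logb_le_logb_of_le (by norm_num : (1:ℝ) < 2) hcpos
            exact_mod_cast hcard i
    have hform : ∑ a, (if Q i a = 0 then 0 else Q i a * Real.logb 2 (Q i a)) = -H (Q i) := by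
      unfold H
      rw [← Finset.sum_neg_distrib]
      apply Finset.sum_congr rfl
      intro a _
      split
      · simp
      · simp
    rw [hform]
    linarith
  have hfirst : -Real.logb 2 N ≤
      ∑ i, lam i * (∑ a, (if Q i a = 0 then 0 else Q i a * Real.logb 2 (Q i a))) := by
    calc -Real.logb 2 N = ∑ i, lam i * (-Real.logb 2 N) := by
          rw [← Finset.sum_mul, hl1, one_mul]
      _ ≤ ∑ i, lam i * (∑ a, (if Q i a = 0 then 0 else Q i a * Real.logb 2 (Q i a))) := by
          apply Finset.sum_le_sum
          intro i _
          exact mul_le_mul_of_nonneg_left (hSA i) (hl0 i)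
  rw [hMI, hHp]
  linarith

section Main
variable {n : ℕ} {𝓧 : Fin n → Type*} [∀ i, Fintype (𝓧 i)]

/-- Index type for the constraint matrix rows. -/
abbrev Idx (𝓧 : Fin n → Type*) (A : Finset (Finset (Fin n))) : Type _ :=
  Unit ⊕ ((α : {α // α ∈ A}) × (∀ i : (α.1 : Finset (Fin n)), 𝓧 i.1))

noncomputable def Lmap (𝓧 : Fin n → Type*) [∀ i, Fintype (𝓧 i)] (A : Finset (Finset (Fin n))) :
    ((∀ i, 𝓧 i) → ℝ) →ₗ[ℝ] (Idx 𝓧 A → ℝ) where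
  toFun q := fun j =>
    Sum.casesOn j (fun _ => ∑ x, q x)
      (fun s => ∑ x, if restr s.1.1 x = s.2 then q x else 0)
  map_add' q r := by
    funext j
    rcases j with _ | ⟨α, t⟩
    · simp [Finset.sum_add_distrib]
    · show (∑ x, if restr α.1 x = t then (q x + r x) else 0)
          = (∑ x, if restr α.1 x = t then q x else 0) + (∑ x, if restr α.1 x = t then r x else 0)
      rw [← Finset.sum_add_distrib]
      apply Finset.sum_congr rfl
      intro x _
      split <;> simp
  map_smul' a q := by
    funext j
    rcases j with _ | ⟨α, t⟩
    · simp [Finset.mul_sum]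
    · show (∑ x, if restr α.1 x = t then a * q x else 0) = a * ∑ x, if restr α.1 x = t then q x else 0
      rw [Finset.mul_sum]
      apply Finset.sum_congr rfl
      intro x _
      split <;> simp

lemma Lmap_inl (A : Finset (Finset (Fin n))) (q : (∀ i, 𝓧 i) → ℝ) :
    Lmap 𝓧 A q (Sum.inl ()) = ∑ x, q x := rfl

lemma Lmap_inr (A : Finset (Finset (Fin n))) (q : (∀ i, 𝓧 i) → ℝ)
    (α : {α // α ∈ A}) (t : ∀ i : (α.1 : Finset (Fin n)), 𝓧 i.1) :
    Lmap 𝓧 A q (Sum.inr ⟨α, t⟩) = ∑ x, if restr α.1 x = t then q x else 0 := rfl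

lemma selfJoint_row (pX : (∀ i, 𝓧 i) → ℝ) (x : ∀ i, 𝓧 i) :
    (∑ y, selfJoint pX x y) = pX x := by
  unfold selfJoint
  rw [Finset.sum_eq_single x]
  · simp
  · intro b _ hb
    rw [if_neg hb]
  · intro h
    exact absurd (Finset.mem_univ x) h

lemma selfJoint_mix {k : ℕ} (pX : (∀ i, 𝓧 i) → ℝ) (c : (∀ i, 𝓧 i) → Fin k → ℝ)
    (v : Fin k) (y : ∀ i, 𝓧 i) :
    (∑ x, c x v * selfJoint pX x y) = c y v * pX y := by
  unfold selfJoint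
  simp [mul_ite]

lemma syn_upper (A : Finset (Finset (Fin n))) (pX : (∀ i, 𝓧 i) → ℝ) (hpX : IsDist pX) :
    ∀ r ∈ synSet (selfJoint pX) A, r ≤ H pX := by
  rintro r ⟨k, c, hc, _, rfl⟩
  have h0 : ∀ (v : Fin k) y, 0 ≤ ∑ x, c x v * selfJoint pX x y := by
    intro v y
    rw [selfJoint_mix]
    exact mul_nonneg (hc.1 y v) (hpX.1 y)
  refine (MI_le_H _ h0).trans (le_of_eq ?_)
  congr 1
  funext y
  rw [Finset.sum_congr rfl (fun v _ => selfJoint_mix pX c v y), ← Finset.sum_mul, hc.2 y, one_mul]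

lemma syn_lower (A : Finset (Finset (Fin n))) (pX : (∀ i, 𝓧 i) → ℝ) (hpX : IsDist pX) :
    ∃ r ∈ synSet (selfJoint pX) A,
      H pX - Real.logb 2 (Fintype.card (Idx 𝓧 A)) ≤ r := by
  classical
  obtain ⟨k, lam, Q, hl0, hl1, hQ0, hLQ, hcard, hmix⟩ :=
    decomp (Lmap 𝓧 A) (Sum.inl ()) (fun q => rfl) Finset.univ pX hpX.1
      (fun x _ => Finset.mem_univ x)
  have hk : 0 < k := by
    by_contra hk
    push_neg at hk
    interval_cases k
    simp at hl1
  have hQ1 : ∀ i, ∑ x, Q i x = 1 := by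
    intro i
    have := congrFun (hLQ i) (Sum.inl ())
    rw [Lmap_inl, Lmap_inl] at this
    rw [this, hpX.2]
  have hQmarg : ∀ i (α : {α // α ∈ A}) t,
      (∑ x, if restr α.1 x = t then Q i x else 0) = ∑ x, if restr α.1 x = t then pX x else 0 := by
    intro i α t
    have := congrFun (hLQ i) (Sum.inr ⟨α, t⟩)
    rw [Lmap_inr, Lmap_inr] at this
    exact this
  set i₀ : Fin k := ⟨0, hk⟩ with hi₀
  set c : (∀ i, 𝓧 i) → Fin k → ℝ :=
    fun x v => if pX x = 0 then (if v = i₀ then 1 else 0) else lam v * Q v x / pX x with hcdef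
  have hjq : ∀ v x, c x v * pX x = lam v * Q v x := by
    intro v x
    by_cases hx : pX x = 0
    · rw [hcdef]
      simp only [if_pos hx, hx, mul_zero]
      symm
      have h := hmix x
      rw [hx] at h
      have := (Finset.sum_eq_zero_iff_of_nonneg
        (fun i _ => mul_nonneg (hl0 i) (hQ0 i x))).1 h.symm
      exact this v (Finset.mem_univ v)
    · rw [hcdef]
      simp only [if_neg hx]
      rw [div_mul_cancel₀ _ hx]
  have hchan : IsChannel c := by
    constructor
    · intro x v
      rw [hcdef]
      by_cases hx : pX x = 0
      · simp only [if_pos hx]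
        split <;> norm_num
      · simp only [if_neg hx]
        exact div_nonneg (mul_nonneg (hl0 v) (hQ0 v x)) (hpX.1 x)
    · intro x
      by_cases hx : pX x = 0
      · rw [hcdef]
        simp [hx]
      · have : ∀ v : Fin k, c x v = lam v * Q v x / pX x := by
          intro v; rw [hcdef]; simp [hx]
        rw [Finset.sum_congr rfl (fun v _ => this v), ← Finset.sum_div, ← hmix x,
          div_self hx]
  have hindep : ∀ α ∈ A,
      IndepWithFun (fun v x => c x v * (∑ y, selfJoint pX x y)) (restr (𝓧 := 𝓧) α) := by
    intro α hα v t
    have hrow : ∀ v x, c x v * (∑ y, selfJoint pX x y) = lam v * Q v x := by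
      intro v x
      rw [selfJoint_row, hjq]
    simp only [hrow]
    have lhs : (∑ x, if restr α x = t then lam v * Q v x else 0)
        = lam v * ∑ x, if restr α x = t then pX x else 0 := by
      rw [← hQmarg v ⟨α, hα⟩ t, Finset.mul_sum]
      apply Finset.sum_congr rfl
      intro x _
      split <;> simp
    rw [lhs]
    have h2 : (∑ x, lam v * Q v x) = lam v := by
      rw [← Finset.mul_sum, hQ1 v, mul_one]
    rw [h2]
    have h3 : ∀ v' : Fin k, (∑ x, if restr α x = t then lam v' * Q v' x else 0)
        = lam v' * ∑ x, if restr α x = t then pX x else 0 := by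
      intro v'
      rw [← hQmarg v' ⟨α, hα⟩ t, Finset.mul_sum]
      apply Finset.sum_congr rfl
      intro x _
      split <;> simp
    rw [Finset.sum_congr rfl (fun v' _ => h3 v'), ← Finset.sum_mul, hl1, one_mul]
  refine ⟨MI (fun (v : Fin k) (y : ∀ i, 𝓧 i) => ∑ x, c x v * selfJoint pX x y),
    ⟨k, c, hchan, hindep, rfl⟩, ?_⟩
  have hMIeq : (fun (v : Fin k) (y : ∀ i, 𝓧 i) => ∑ x, c x v * selfJoint pX x y)
      = fun v y => lam v * Q v y := by
    funext v y
    rw [selfJoint_mix, hjq]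
  rw [hMIeq]
  exact MI_mix_ge lam Q pX hl0 hl1 hQ0 hQ1 hmix (Fintype.card (Idx 𝓧 A))
    (Fintype.card_pos_iff.2 ⟨Sum.inl ()⟩) hcard

lemma syn_bounds (A : Finset (Finset (Fin n))) (pX : (∀ i, 𝓧 i) → ℝ) (hpX : IsDist pX) :
    H pX - Real.logb 2 (Fintype.card (Idx 𝓧 A)) ≤ Syn (selfJoint pX) A ∧
      Syn (selfJoint pX) A ≤ H pX := by
  obtain ⟨r, hr, hrge⟩ := syn_lower A pX hpX
  have hbdd : BddAbove (synSet (selfJoint pX) A) :=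
    ⟨H pX, fun s hs => syn_upper A pX hpX s hs⟩
  constructor
  · exact hrge.trans (le_csSup hbdd hr)
  · exact csSup_le ⟨r, hr⟩ (fun s hs => syn_upper A pX hpX s hs)

end Main

lemma card_Idx_le {n m K : ℕ} (𝓧 : Fin n → Type*) [∀ i, Fintype (𝓧 i)]
    (hK : ∀ i, Fintype.card (𝓧 i) ≤ K) :
    Fintype.card (Idx 𝓧 ((Finset.univ : Finset (Finset (Fin n))).filter (fun α => α.card = m)))
      ≤ 2 * ((n+1)*(K+1))^(m+1) := by
  classical
  set A := (Finset.univ : Finset (Finset (Fin n))).filter (fun α => α.card = m) with hA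
  have hcard : Fintype.card (Idx 𝓧 A)
      = 1 + ∑ α : {α // α ∈ A}, Fintype.card (∀ i : (α.1 : Finset (Fin n)), 𝓧 i.1) := by
    rw [Fintype.card_sum, Fintype.card_sigma]
    simp
  have hfiber : ∀ α : {α // α ∈ A},
      Fintype.card (∀ i : (α.1 : Finset (Fin n)), 𝓧 i.1) ≤ K ^ m := by
    intro α
    have hm : (α.1 : Finset (Fin n)).card = m := by
      have h2 := α.2
      simp only [hA, Finset.mem_filter] at h2
      exact h2.2
    calc Fintype.card (∀ i : (α.1 : Finset (Fin n)), 𝓧 i.1)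
        = ∏ i : (α.1 : Finset (Fin n)), Fintype.card (𝓧 i.1) := Fintype.card_pi
      _ ≤ ∏ _i : (α.1 : Finset (Fin n)), K :=
          Finset.prod_le_prod' (fun i _ => hK i.1)
      _ = K ^ ((α.1 : Finset (Fin n)).card) := by
          rw [Finset.prod_const, Finset.card_univ, Fintype.card_coe]
      _ = K ^ m := by rw [hm]
  have hAcard : A.card = n.choose m := by
    rw [hA, ← Finset.powerset_univ, ← Finset.powersetCard_eq_filter,
      Finset.card_powersetCard, Finset.card_univ, Fintype.card_fin]
  calc Fintype.card (Idx 𝓧 A)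
      = 1 + ∑ α : {α // α ∈ A}, Fintype.card (∀ i : (α.1 : Finset (Fin n)), 𝓧 i.1) := hcard
    _ ≤ 1 + ∑ _α : {α // α ∈ A}, K ^ m := by
        apply Nat.add_le_add_left
        exact Finset.sum_le_sum (fun α _ => hfiber α)
    _ = 1 + A.card * K ^ m := by
        rw [Finset.sum_const, Finset.card_univ, Fintype.card_coe, smul_eq_mul]
    _ = 1 + n.choose m * K ^ m := by rw [hAcard]
    _ ≤ 1 + n ^ m * K ^ m := by
        apply Nat.add_le_add_left
        exact Nat.mul_le_mul_right _ (Nat.choose_le_pow n m)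
    _ ≤ ((n+1)*(K+1))^(m+1) + ((n+1)*(K+1))^(m+1) := by
        apply Nat.add_le_add
        · exact Nat.one_le_pow _ _ (by positivity)
        · calc n ^ m * K ^ m = (n*K)^m := (Nat.mul_pow n K m).symm
            _ ≤ ((n+1)*(K+1))^m := Nat.pow_le_pow_left (by nlinarith) m
            _ ≤ ((n+1)*(K+1))^(m+1) :=
                Nat.pow_le_pow_right (by positivity) (Nat.le_succ m)
    _ = 2 * ((n+1)*(K+1))^(m+1) := by ring

lemma logb_card_Idx_le {n m K : ℕ} (𝓧 : Fin n → Type*) [∀ i, Fintype (𝓧 i)]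
    (hK : ∀ i, Fintype.card (𝓧 i) ≤ K) :
    Real.logb 2 (Fintype.card (Idx 𝓧
        ((Finset.univ : Finset (Finset (Fin n))).filter (fun α => α.card = m))))
      ≤ 1 + (m+1) * (Real.logb 2 (n+1) + Real.logb 2 (K+1)) := by
  have hpos : (0:ℝ) < Fintype.card (Idx 𝓧
      ((Finset.univ : Finset (Finset (Fin n))).filter (fun α => α.card = m))) := by
    have : 0 < Fintype.card (Idx 𝓧
        ((Finset.univ : Finset (Finset (Fin n))).filter (fun α => α.card = m))) :=
      Fintype.card_pos_iff.2 ⟨Sum.inl ()⟩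
    exact_mod_cast this
  have hle := card_Idx_le (m := m) (K := K) 𝓧 hK
  have hleR : (Fintype.card (Idx 𝓧
      ((Finset.univ : Finset (Finset (Fin n))).filter (fun α => α.card = m))) : ℝ)
      ≤ 2 * ((n+1)*(K+1))^(m+1) := by exact_mod_cast hle
  calc Real.logb 2 _ ≤ Real.logb 2 (2 * (((n:ℝ)+1)*((K:ℝ)+1))^(m+1)) := by
        apply Real.logb_le_logb_of_le (by norm_num : (1:ℝ) < 2) hpos
        exact hleR
    _ = 1 + (m+1) * (Real.logb 2 (n+1) + Real.logb 2 (K+1)) := by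
        rw [Real.logb_mul (by norm_num) (by positivity),
          Real.logb_pow, Real.logb_mul (by positivity) (by positivity),
          Real.logb_self_eq_one (by norm_num : (1:ℝ) < 2)]
        push_cast
        ring

lemma tendsto_logb_succ_div :
    Filter.Tendsto (fun n : ℕ => Real.logb 2 ((n:ℝ)+1) / (n:ℝ)) Filter.atTop (nhds 0) := by
  have h := Real.tendsto_pow_log_div_mul_add_atTop 1 (-1) 1 one_ne_zero
  have hcomp : Filter.Tendsto (fun n : ℕ => (n:ℝ)+1) Filter.atTop Filter.atTop :=
    Filter.tendsto_atTop_add_const_right _ 1 tendsto_natCast_atTop_atTop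
  have h2 := h.comp hcomp
  have h3 : Filter.Tendsto (fun n : ℕ => Real.log ((n:ℝ)+1) / (n:ℝ))
      Filter.atTop (nhds 0) := by
    apply h2.congr
    intro n
    show Real.log ((n:ℝ)+1) ^ 1 / (1*((n:ℝ)+1) + -1) = _
    rw [pow_one]
    ring_nf
  have h4 := h3.div_const (Real.log 2)
  rw [zero_div] at h4
  apply h4.congr
  intro n
  unfold Real.logb
  ring


/-- asymptotic dominance of synergy. If all alphabets have cardinality
at most `K` and `H(X)/n → c > 0`, then for fixed `m` the backbone self-synergy
`B^m(X) = S^{γ_m}(X → X)` satisfies `B^m(X)/H(X) → 1`. -/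
theorem backbone_asymptotic_dominance
    (K : ℕ) (𝓧 : (n : ℕ) → Fin n → Type) [∀ n i, Fintype (𝓧 n i)]
    (hK : ∀ n i, Fintype.card (𝓧 n i) ≤ K)
    (pX : (n : ℕ) → (∀ i, 𝓧 n i) → ℝ) (hpX : ∀ n, IsDist (pX n))
    (c : ℝ) (hc : 0 < c)
    (hH : Filter.Tendsto (fun n => H (pX n) / n) Filter.atTop (nhds c))
    (m : ℕ) :
    Filter.Tendsto (fun n =>
        Syn (selfJoint (pX n))
            ((Finset.univ : Finset (Finset (Fin n))).filter (fun α => α.card = m))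
          / H (pX n))
      Filter.atTop (nhds 1) := by
  classical
  set A : (n : ℕ) → Finset (Finset (Fin n)) :=
    fun n => (Finset.univ : Finset (Finset (Fin n))).filter (fun α => α.card = m) with hA
  set B : ℕ → ℝ := fun n => Syn (selfJoint (pX n)) (A n) with hB
  set Hn : ℕ → ℝ := fun n => H (pX n) with hHn
  set D : ℕ → ℝ := fun n => 1 + (m+1) * (Real.logb 2 ((n:ℝ)+1) + Real.logb 2 ((K:ℝ)+1))
    with hD
  have hlow : ∀ n, Hn n - D n ≤ B n := by
    intro n
    have h1 := (syn_bounds (A n) (pX n) (hpX n)).1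
    have h2 : Real.logb 2 (Fintype.card (Idx (𝓧 n) (A n))) ≤ D n := by
      have := logb_card_Idx_le (m := m) (K := K) (𝓧 n) (hK n)
      rw [hD, hA]
      push_cast
      push_cast at this
      convert this using 2
    linarith
  have hup : ∀ n, B n ≤ Hn n := fun n => (syn_bounds (A n) (pX n) (hpX n)).2
  -- D n / n → 0
  have hDlim : Filter.Tendsto (fun n : ℕ => D n / n) Filter.atTop (nhds 0) := by
    have t1 : Filter.Tendsto (fun n : ℕ => 1/(n:ℝ)) Filter.atTop (nhds 0) :=
      tendsto_one_div_atTop_nhds_zero_nat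
    have t2 := tendsto_logb_succ_div
    have tA : Filter.Tendsto (fun n : ℕ =>
        1/(n:ℝ) + ((m:ℝ)+1) * (Real.logb 2 ((n:ℝ)+1) / n)
          + (((m:ℝ)+1) * Real.logb 2 ((K:ℝ)+1)) * (1/(n:ℝ)))
        Filter.atTop (nhds (0 + ((m:ℝ)+1) * 0 + (((m:ℝ)+1) * Real.logb 2 ((K:ℝ)+1)) * 0)) :=
      (t1.add (t2.const_mul _)).add (t1.const_mul _)
    have : (0:ℝ) + ((m:ℝ)+1) * 0 + (((m:ℝ)+1) * Real.logb 2 ((K:ℝ)+1)) * 0 = 0 := by ring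
    rw [this] at tA
    apply tA.congr
    intro n
    simp only [hD, div_eq_mul_inv, one_div]
    ring
  -- limits and squeeze
  have heps : Filter.Tendsto (fun n : ℕ => (D n / n) / (Hn n / n)) Filter.atTop (nhds 0) := by
    have := hDlim.div hH hc.ne'
    rwa [zero_div] at this
  have hLlim : Filter.Tendsto (fun n : ℕ => 1 - (D n / n) / (Hn n / n))
      Filter.atTop (nhds 1) := by
    have := (tendsto_const_nhds (x := (1:ℝ)) (f := Filter.atTop)).sub heps
    rwa [sub_zero] at this
  have hevH : ∀ᶠ n : ℕ in Filter.atTop, 0 < Hn n / n :=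
    hH.eventually (eventually_gt_nhds hc)
  have hevn : ∀ᶠ n : ℕ in Filter.atTop, 0 < n := Filter.eventually_gt_atTop 0
  have hevHpos : ∀ᶠ n : ℕ in Filter.atTop, 0 < Hn n := by
    filter_upwards [hevH, hevn] with n h1 h2
    have hn : (0:ℝ) < n := by exact_mod_cast h2
    have := mul_pos h1 hn
    rwa [div_mul_cancel₀ _ hn.ne'] at this
  have hev_up : ∀ᶠ n : ℕ in Filter.atTop, B n / Hn n ≤ 1 := by
    filter_upwards [hevHpos] with n h1
    rw [div_le_one h1]
    exact hup n
  have hev_low : ∀ᶠ n : ℕ in Filter.atTop,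
      1 - (D n / n) / (Hn n / n) ≤ B n / Hn n := by
    filter_upwards [hevHpos, hevn] with n h1 h2
    have hn : (0:ℝ) < n := by exact_mod_cast h2
    have hdd : (D n / n) / (Hn n / n) = D n / Hn n := by
      rw [div_div_div_cancel_right₀]
      exact hn.ne'
    rw [hdd]
    have hstep : (Hn n - D n) / Hn n ≤ B n / Hn n :=
      div_le_div_of_nonneg_right (hlow n) h1.le
    calc 1 - D n / Hn n = (Hn n - D n) / Hn n := by
          rw [sub_div, div_self h1.ne']
      _ ≤ B n / Hn n := hstep
  exact tendsto_of_tendsto_of_tendsto_of_le_of_le' hLlim tendsto_const_nhds hev_low hev_up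
end

section
/- For the backbone constraints γ_m = {α ⊆ [n] : |α| = m}, the backbone synergies are monotone: 0 = B^n(X → Y) ≤ B^{n-1}(X → Y) ≤ ... ≤ B^1(X → Y) ≤ B^0(X → Y) = I(X;Y). -/
open Finset
open scoped BigOperators Classical

section BackboneAux

/-- Log-sum inequality. -/
private lemma log_sum_ineq {ι : Type*} [Fintype ι] (a b : ι → ℝ)
    (ha : ∀ i, 0 ≤ a i) (hb : ∀ i, 0 ≤ b i) (hab : ∀ i, b i = 0 → a i = 0) :
    (∑ i, a i) * Real.logb 2 ((∑ i, a i) / (∑ i, b i)) ≤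
      ∑ i, a i * Real.logb 2 (a i / b i) := by
  have hlog2 : (0:ℝ) < Real.log 2 := Real.log_pos one_lt_two
  have key : (∑ i, a i) * Real.log ((∑ i, a i) / (∑ i, b i)) ≤
      ∑ i, a i * Real.log (a i / b i) := by
    set A := ∑ i, a i with hA
    set B := ∑ i, b i with hB
    rcases eq_or_lt_of_le (Finset.sum_nonneg (fun i _ => hb i)) with h0 | hBpos
    · have hball : ∀ i, b i = 0 := by
        intro i
        have := (Finset.sum_eq_zero_iff_of_nonneg (fun i _ => hb i)).1 h0.symm
        exact this i (Finset.mem_univ i)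
      have haall : ∀ i, a i = 0 := fun i => hab i (hball i)
      have : A = 0 := by simp [hA, haall]
      simp [this, haall]
    · have hconv := Real.convexOn_mul_log
      have hwnn : ∀ i ∈ Finset.univ, 0 ≤ b i / B := fun i _ => div_nonneg (hb i) hBpos.le
      have hwsum : ∑ i, b i / B = 1 := by
        rw [← Finset.sum_div]; exact div_self (ne_of_gt hBpos)
      have hmem : ∀ i ∈ Finset.univ, a i / b i ∈ Set.Ici (0:ℝ) := by
        intro i _; exact div_nonneg (ha i) (hb i)
      have hjensen := hconv.map_sum_le hwnn hwsum hmem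
      have hcm : ∑ i, (b i / B) • (a i / b i) = A / B := by
        rw [hA, Finset.sum_div]
        apply Finset.sum_congr rfl
        intro i _
        rcases eq_or_lt_of_le (hb i) with h0 | hpos
        · simp [← h0, hab i h0.symm]
        · field_simp; rw [smul_eq_mul, div_mul_div_comm, mul_comm (b i) (a i), mul_div_mul_right _ _ hpos.ne']
      rw [hcm] at hjensen
      have h2 : A / B * Real.log (A / B) ≤
          ∑ i, (b i / B) * ((a i / b i) * Real.log (a i / b i)) := hjensen
      have h3 : ∀ i, (b i / B) * ((a i / b i) * Real.log (a i / b i)) =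
          (a i * Real.log (a i / b i)) / B := by
        intro i
        rcases eq_or_lt_of_le (hb i) with h0 | hpos
        · simp [← h0, hab i h0.symm]
        · field_simp
      simp only [h3] at h2
      rw [← Finset.sum_div] at h2
      have h4 : A / B * Real.log (A / B) = (A * Real.log (A / B)) / B := by ring
      rw [h4, div_le_div_iff_of_pos_right] at h2 <;> try exact hBpos
      exact h2
  simp only [Real.logb, div_eq_mul_inv]
  calc (∑ i, a i) * (Real.log ((∑ i, a i) * (∑ i, b i)⁻¹) * (Real.log 2)⁻¹)
      = ((∑ i, a i) * Real.log ((∑ i, a i) * (∑ i, b i)⁻¹)) * (Real.log 2)⁻¹ := by ring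
    _ ≤ (∑ i, a i * Real.log (a i * (b i)⁻¹)) * (Real.log 2)⁻¹ := by
        apply mul_le_mul_of_nonneg_right _ (inv_nonneg.2 hlog2.le)
        simpa [div_eq_mul_inv] using key
    _ = ∑ i, a i * (Real.log (a i * (b i)⁻¹) * (Real.log 2)⁻¹) := by
        rw [Finset.sum_mul]; apply Finset.sum_congr rfl; intro i _; ring

/-- Data processing inequality. -/
private lemma MI_channel_le {X Y V : Type*} [Fintype X] [Fintype Y] [Fintype V]
    (p : X → Y → ℝ) (hp : IsJoint p) (c : X → V → ℝ) (hc : IsChannel c) :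
    MI (fun v y => ∑ x, c x v * p x y) ≤ MI p := by
  obtain ⟨hpnn, hpsum⟩ := hp
  obtain ⟨hcnn, hcsum⟩ := hc
  set pX : X → ℝ := fun x => ∑ y, p x y with hpX
  set pY : Y → ℝ := fun y => ∑ x, p x y with hpY
  have hpXnn : ∀ x, 0 ≤ pX x := fun x => Finset.sum_nonneg fun y _ => hpnn x y
  have hX0 : ∀ x y, pX x = 0 → p x y = 0 := by
    intro x y h
    have h1 : p x y ≤ pX x := Finset.single_le_sum (fun y _ => hpnn x y) (Finset.mem_univ y)
    exact le_antisymm (h ▸ h1) (hpnn x y)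
  have hY0 : ∀ x y, pY y = 0 → p x y = 0 := by
    intro x y h
    have h1 : p x y ≤ pY y := Finset.single_le_sum (fun x _ => hpnn x y) (Finset.mem_univ x)
    exact le_antisymm (h ▸ h1) (hpnn x y)
  have hcol : ∀ y, ∑ v, ∑ x, c x v * p x y = pY y := by
    intro y
    rw [Finset.sum_comm]
    apply Finset.sum_congr rfl
    intro x _
    rw [← Finset.sum_mul, hcsum x, one_mul]
  have hrow : ∀ v, ∑ y, ∑ x, c x v * p x y = ∑ x, c x v * pX x := by
    intro v
    rw [Finset.sum_comm]
    apply Finset.sum_congr rfl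
    intro x _
    rw [← Finset.mul_sum]
  unfold MI
  have step1 : ∀ v y,
      (if (∑ x, c x v * p x y) = 0 then 0 else
        (∑ x, c x v * p x y) * Real.logb 2 ((∑ x, c x v * p x y) /
          ((∑ y', ∑ x, c x v * p x y') * (∑ v', ∑ x, c x v' * p x y)))) ≤
      ∑ x, (c x v * p x y) * Real.logb 2 ((c x v * p x y) / (c x v * pX x * pY y)) := by
    intro v y
    have hs := log_sum_ineq (fun x => c x v * p x y) (fun x => c x v * pX x * pY y)
      (fun x => mul_nonneg (hcnn x v) (hpnn x y))
      (fun x => mul_nonneg (mul_nonneg (hcnn x v) (hpXnn x))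
        (Finset.sum_nonneg fun x _ => hpnn x y))
      (by
        intro x h
        show c x v * p x y = 0
        have h' : c x v * pX x * pY y = 0 := h
        rcases mul_eq_zero.1 h' with h1 | h1
        · rcases mul_eq_zero.1 h1 with h2 | h2
          · rw [h2, zero_mul]
          · rw [hX0 x y h2, mul_zero]
        · rw [hY0 x y h1, mul_zero])
    have hb' : ∑ x, c x v * pX x * pY y =
        (∑ y', ∑ x, c x v * p x y') * (∑ v', ∑ x, c x v' * p x y) := by
      rw [hrow v, hcol y, ← Finset.sum_mul]
    rw [hb'] at hs
    by_cases h : (∑ x, c x v * p x y) = 0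
    · rw [if_pos h]
      rw [h, zero_mul] at hs
      exact hs
    · rw [if_neg h]; exact hs
  calc ∑ v, ∑ y, (if (∑ x, c x v * p x y) = 0 then 0 else
        (∑ x, c x v * p x y) * Real.logb 2 ((∑ x, c x v * p x y) /
          ((∑ y', ∑ x, c x v * p x y') * (∑ v', ∑ x, c x v' * p x y))))
      ≤ ∑ v, ∑ y, ∑ x, (c x v * p x y) * Real.logb 2 ((c x v * p x y) / (c x v * pX x * pY y)) := by
        apply Finset.sum_le_sum; intro v _
        apply Finset.sum_le_sum; intro y _
        exact step1 v y
    _ = ∑ x, ∑ y, ∑ v, (c x v * p x y) * Real.logb 2 ((c x v * p x y) / (c x v * pX x * pY y)) := by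
        rw [Finset.sum_comm]
        conv_lhs => rw [show (fun (y:Y) => ∑ v : V, ∑ x : X, c x v * p x y *
          Real.logb 2 (c x v * p x y / (c x v * pX x * pY y))) = (fun (y:Y) => ∑ x : X, ∑ v : V,
          c x v * p x y * Real.logb 2 (c x v * p x y / (c x v * pX x * pY y)))
          from funext fun y => Finset.sum_comm]
        rw [Finset.sum_comm]
    _ = ∑ x, ∑ y, (if p x y = 0 then 0 else
          p x y * Real.logb 2 (p x y / (pX x * pY y))) := by
        apply Finset.sum_congr rfl; intro x _
        apply Finset.sum_congr rfl; intro y _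
        have hper : ∀ v, (c x v * p x y) * Real.logb 2 ((c x v * p x y) / (c x v * pX x * pY y))
            = c x v * (if p x y = 0 then 0 else p x y * Real.logb 2 (p x y / (pX x * pY y))) := by
          intro v
          by_cases hcv : c x v = 0
          · simp [hcv]
          · by_cases hpxy : p x y = 0
            · simp [hpxy]
            · rw [if_neg hpxy, mul_assoc (c x v) (pX x) (pY y), mul_div_mul_left _ _ hcv]
              ring
        simp only [hper]
        rw [← Finset.sum_mul, hcsum x, one_mul]
    _ = MI p := by
        unfold MI
        apply Finset.sum_congr rfl; intro x _
        apply Finset.sum_congr rfl; intro y _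
        simp only [hpX, hpY]

/-- MI of a product distribution is zero. -/
private lemma MI_prod_eq_zero {V Y : Type*} [Fintype V] [Fintype Y] (f : V → ℝ) (g : Y → ℝ)
    (hf : ∑ v, f v = 1) (hg : ∑ y, g y = 1) : MI (fun v y => f v * g y) = 0 := by
  unfold MI
  apply Finset.sum_eq_zero; intro v _
  apply Finset.sum_eq_zero; intro y _
  by_cases h : f v * g y = 0
  · rw [if_pos h]
  · rw [if_neg h]
    have h1 : ∑ y', f v * g y' = f v := by rw [← Finset.mul_sum, hg, mul_one]
    have h2 : ∑ v', f v' * g y = g y := by rw [← Finset.sum_mul, hf, one_mul]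
    rw [h1, h2, div_self h, Real.logb_one, mul_zero]

/-- Independence from `f(X)` implies independence from `g(f(X))`. -/
private lemma IndepWithFun.comp {V X S T : Type*} [Fintype V] [Fintype X] [Fintype S]
    {q : V → X → ℝ} {f : X → S} (g : S → T) (h : IndepWithFun q f) :
    IndepWithFun q (g ∘ f) := by
  intro v t
  simp only [Function.comp]
  have haux : ∀ w : V, (∑ x, if g (f x) = t then q w x else 0) =
      ∑ s, (if g s = t then (∑ x, if f x = s then q w x else 0) else 0) := by
    intro w
    have h1 : ∀ x, (if g (f x) = t then q w x else 0) =
        ∑ s, (if f x = s then (if g s = t then q w x else 0) else 0) := by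
      intro x
      rw [Finset.sum_ite_eq (Finset.univ) (f x) (fun s => if g s = t then q w x else 0)]
      simp
    simp only [h1]
    rw [Finset.sum_comm]
    apply Finset.sum_congr rfl; intro s _
    by_cases hgs : g s = t <;> simp [hgs]
  rw [haux v]
  have h2 : ∀ s, (if g s = t then (∑ x, if f x = s then q v x else 0) else 0) =
      (∑ x, q v x) * (if g s = t then (∑ v', ∑ x, if f x = s then q v' x else 0) else 0) := by
    intro s
    by_cases hgs : g s = t
    · rw [if_pos hgs, if_pos hgs, h v s]
    · rw [if_neg hgs, if_neg hgs, mul_zero]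
  simp only [h2]
  rw [← Finset.mul_sum]
  congr 1
  conv_rhs => rw [show (fun (v':V) => ∑ x, if g (f x) = t then q v' x else 0)
    = (fun (v':V) => ∑ s, (if g s = t then (∑ x, if f x = s then q v' x else 0) else 0))
    from funext haux]
  rw [Finset.sum_comm]
  apply Finset.sum_congr rfl; intro s _
  by_cases hgs : g s = t <;> simp [hgs]

private lemma MI_reindex {V X Y : Type*} [Fintype V] [Fintype X] [Fintype Y]
    (e : V ≃ X) (p : X → Y → ℝ) : MI (fun v y => p (e v) y) = MI p := by
  unfold MI
  have hm : ∀ y, ∑ v, p (e v) y = ∑ x, p x y := fun y => Equiv.sum_comp e (fun x => p x y)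
  simp only [hm]
  exact Equiv.sum_comp e (fun x => ∑ y, if p x y = 0 then 0 else
    p x y * Real.logb 2 (p x y / ((∑ y', p x y') * (∑ x', p x' y))))

end BackboneAux

/-- monotonicity of the backbone synergies
`0 = B^n ≤ B^{n-1} ≤ ⋯ ≤ B^1 ≤ B^0 = I(X;Y)`,
where `B^m(X → Y) = S^{γ_m}(X → Y)` with `γ_m` the subsets of size `m`. -/
theorem backbone_monotone
    {n : ℕ} {𝓧 : Fin n → Type*} [∀ i, Fintype (𝓧 i)] {Y : Type*} [Fintype Y]
    (p : (∀ i, 𝓧 i) → Y → ℝ) (hp : IsJoint p) :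
    Syn p (Finset.univ.filter fun α : Finset (Fin n) => α.card = n) = 0 ∧
    Syn p (Finset.univ.filter fun α : Finset (Fin n) => α.card = 0) = MI p ∧
    (∀ m, m < n →
      Syn p (Finset.univ.filter fun α : Finset (Fin n) => α.card = m + 1) ≤
        Syn p (Finset.univ.filter fun α : Finset (Fin n) => α.card = m)) := by
  classical
  obtain ⟨hpnn, hpsum⟩ := hp
  have hsum_pY : ∑ y, ∑ x, p x y = 1 := by rw [Finset.sum_comm]; exact hpsum
  -- 0 is always achievable (constant channel)
  have hzero : ∀ A : Finset (Finset (Fin n)), (0:ℝ) ∈ synSet p A := by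
    intro A
    refine ⟨1, fun _ _ => 1, ⟨fun _ _ => zero_le_one, fun x => by simp⟩, ?_, ?_⟩
    · intro α _ v t
      have hv : v = 0 := Subsingleton.elim _ _
      subst hv
      simp only [one_mul, Fin.sum_univ_one]
      rw [hpsum, one_mul]
    · have hrw : (fun (v : Fin 1) (y : Y) => ∑ x, (1:ℝ) * p x y) =
          (fun (v : Fin 1) (y : Y) => (fun _ : Fin 1 => (1:ℝ)) v * (∑ x, p x y)) := by
        funext v y; simp
      rw [hrw, MI_prod_eq_zero (fun _ : Fin 1 => (1:ℝ)) (fun y => ∑ x, p x y)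
        (by simp) hsum_pY]
  -- all achievable values are at most MI p
  have hle : ∀ A : Finset (Finset (Fin n)), ∀ r ∈ synSet p A, r ≤ MI p := by
    rintro A r ⟨k, c, hc, hind, rfl⟩
    exact MI_channel_le p ⟨hpnn, hpsum⟩ c hc
  have hbdd : ∀ A : Finset (Finset (Fin n)), BddAbove (synSet p A) :=
    fun A => ⟨MI p, fun r hr => hle A r hr⟩
  refine ⟨?_, ?_, ?_⟩
  · -- B^n = 0
    apply le_antisymm
    · apply csSup_le ⟨0, hzero _⟩
      rintro r ⟨k, c, ⟨hcnn, hcsum⟩, hind, rfl⟩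
      have hunivmem : (Finset.univ : Finset (Fin n)) ∈
          Finset.univ.filter (fun α : Finset (Fin n) => α.card = n) := by
        simp [Finset.card_univ]
      have hq := hind Finset.univ hunivmem
      set qV : Fin k → ℝ := fun v => ∑ x, c x v * (∑ y, p x y) with hqV
      have hL : ∀ (w : Fin k) (x0 : ∀ i, 𝓧 i),
          (∑ x, if restr (𝓧 := 𝓧) Finset.univ x = restr Finset.univ x0 then
            c x w * (∑ y, p x y) else 0) = c x0 w * (∑ y, p x0 y) := by
        intro w x0
        have hiff : ∀ x, (restr (𝓧 := 𝓧) Finset.univ x = restr Finset.univ x0) ↔ x = x0 := by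
          intro x
          constructor
          · intro hh; funext i; exact congrFun hh ⟨i, Finset.mem_univ i⟩
          · rintro rfl; rfl
        rw [Finset.sum_congr rfl (fun x _ => if_congr (hiff x) rfl rfl)]
        rw [Finset.sum_ite_eq' Finset.univ x0 (fun x => c x w * (∑ y, p x y))]
        simp
      have hkey : ∀ v x, c x v * (∑ y, p x y) = qV v * (∑ y, p x y) := by
        intro v x0
        have h := hq v (restr Finset.univ x0)
        simp only at h
        rw [hL v x0] at h
        have hRin : (∑ v', ∑ x, if restr (𝓧 := 𝓧) Finset.univ x = restr Finset.univ x0 then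
            c x v' * (∑ y, p x y) else 0) = ∑ v', c x0 v' * (∑ y, p x0 y) :=
          Finset.sum_congr rfl (fun v' _ => hL v' x0)
        rw [hRin, ← Finset.sum_mul, hcsum x0, one_mul] at h
        exact h
      have hpt : ∀ v x y, c x v * p x y = qV v * p x y := by
        intro v x y
        by_cases h0 : (∑ y, p x y) = 0
        · have hz : p x y = 0 := by
            have h1 : p x y ≤ ∑ y, p x y :=
              Finset.single_le_sum (fun y _ => hpnn x y) (Finset.mem_univ y)
            exact le_antisymm (h0 ▸ h1) (hpnn x y)
          rw [hz, mul_zero, mul_zero]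
        · rw [mul_right_cancel₀ h0 (hkey v x)]
      have hrw : (fun (v : Fin k) (y : Y) => ∑ x, c x v * p x y) =
          (fun (v : Fin k) (y : Y) => qV v * (∑ x, p x y)) := by
        funext v y
        calc ∑ x, c x v * p x y = ∑ x, qV v * p x y :=
              Finset.sum_congr rfl (fun x _ => hpt v x y)
          _ = qV v * ∑ x, p x y := by rw [Finset.mul_sum]
      have hqVsum : ∑ v, qV v = 1 := by
        calc ∑ v, qV v = ∑ x, ∑ v, c x v * (∑ y, p x y) := Finset.sum_comm
          _ = ∑ x, ∑ y, p x y := by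
              apply Finset.sum_congr rfl; intro x _
              rw [← Finset.sum_mul, hcsum x, one_mul]
          _ = 1 := hpsum
      rw [hrw, MI_prod_eq_zero qV (fun y => ∑ x, p x y) hqVsum hsum_pY]
    · exact le_csSup (hbdd _) (hzero _)
  · -- B^0 = MI p
    apply le_antisymm
    · exact csSup_le ⟨0, hzero _⟩ (fun r hr => hle _ r hr)
    · apply le_csSup (hbdd _)
      set e := Fintype.equivFin (∀ i, 𝓧 i) with he
      refine ⟨Fintype.card (∀ i, 𝓧 i), fun x v => if e x = v then 1 else 0, ?_, ?_, ?_⟩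
      · constructor
        · intro a b; by_cases h : e a = b <;> simp [h]
        · intro a; simp [Finset.sum_ite_eq]
      · intro α hα v t
        have hαe : α = ∅ := Finset.card_eq_zero.1 (Finset.mem_filter.1 hα).2
        subst hαe
        have htriv : ∀ x : (∀ i, 𝓧 i), restr (𝓧 := 𝓧) (∅ : Finset (Fin n)) x = t := by
          intro x; funext i; exact absurd i.2 (Finset.notMem_empty i.1)
        simp only [htriv, if_true]
        have htot : ∑ v', ∑ x, (if e x = v' then (1:ℝ) else 0) * (∑ y, p x y) = 1 := by
          rw [Finset.sum_comm]
          calc ∑ x, ∑ v', (if e x = v' then (1:ℝ) else 0) * (∑ y, p x y)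
              = ∑ x, ∑ y, p x y := by
                apply Finset.sum_congr rfl; intro x _
                rw [← Finset.sum_mul]
                simp [Finset.sum_ite_eq]
            _ = 1 := hpsum
        rw [htot, mul_one]
      · have hrw : (fun (v : Fin (Fintype.card (∀ i, 𝓧 i))) (y : Y) =>
            ∑ x, (if e x = v then (1:ℝ) else 0) * p x y) =
            (fun v y => p (e.symm v) y) := by
          funext v y
          have h1 : ∀ x, (if e x = v then (1:ℝ) else 0) * p x y =
              (if x = e.symm v then p x y else 0) := by
            intro x
            by_cases hx : e x = v
            · have hx2 : x = e.symm v := by rw [← hx, Equiv.symm_apply_apply]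
              simp [hx, hx2]
            · have hx2 : ¬(x = e.symm v) := fun hh => hx (by rw [hh, Equiv.apply_symm_apply])
              simp [hx, hx2]
          rw [Finset.sum_congr rfl (fun x _ => h1 x),
            Finset.sum_ite_eq' Finset.univ (e.symm v) (fun x => p x y)]
          simp
        rw [hrw, MI_reindex e.symm p]
  · -- monotone step
    intro m hm
    apply csSup_le_csSup (hbdd _) ⟨0, hzero _⟩
    rintro r ⟨k, c, hc, hind, rfl⟩
    refine ⟨k, c, hc, ?_, rfl⟩
    intro α hα
    have hcard : α.card = m := (Finset.mem_filter.1 hα).2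
    obtain ⟨β, hsub, _, hβcard⟩ := Finset.exists_subsuperset_card_eq (n := m + 1)
      (Finset.subset_univ α) (by rw [hcard]; exact Nat.le_succ m)
      (by rw [Finset.card_univ, Fintype.card_fin]; omega)
    have hβ := hind β (Finset.mem_filter.2 ⟨Finset.mem_univ β, hβcard⟩)
    have hfac : restr (𝓧 := 𝓧) α =
        (fun (s : ∀ i : β, 𝓧 i) (i : α) => s ⟨i.1, hsub i.2⟩) ∘ restr β := rfl
    rw [hfac]
    exact hβ.comp _
end
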